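/- arXiv:1107.1859 — 8 statements merged into one kernel-verified Lean document; each statement's English description precedes it below -/
import Mathlib

section
/- Let G be a subgroup of SU(J) such that there is no G-stable 1-dimensional complex subspace of ℂ³. Then every G-stable real subspace W of ℂ³ has real dimension 0, 3, or 6; that is, there is no G-stable real subspace of real dimension 1, 2, 4, or 5. -/
open Matrix Polynomial

/-- The matrix `matJ` with rows `(1,0,0), (0,0,1), (0,1,0)`. -/
noncomputable def matJ : Matrix (Fin 3) (Fin 3) ℂ := !![1,0,0; 0,0,1; 0,1,0]

/-- The Hermitian form `⟨x,y⟩ = x₀ conj y₀ + x₁ conj y₂ + x₂ conj y₁` on `ℂ³`. -/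
noncomputable def herm (x y : Fin 3 → ℂ) : ℂ :=
  x 0 * star (y 0) + x 1 * star (y 2) + x 2 * star (y 1)

/-- Membership in `SU(matJ)`: determinant one and `gᴴ matJ g = matJ`. -/
def InSUJ (g : Matrix (Fin 3) (Fin 3) ℂ) : Prop :=
  g.det = 1 ∧ gᴴ * matJ * g = matJ

/-- `g` is loxodromic: it has an eigenvalue (root of its characteristic polynomial)
of modulus greater than `1`. -/
def Loxodromic (g : Matrix (Fin 3) (Fin 3) ℂ) : Prop :=
  ∃ μ : ℂ, g.charpoly.IsRoot μ ∧ 1 < ‖μ‖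

/-- `G` is a subgroup of `SU(matJ)`. -/
def IsSubgroupOfSUJ (G : Set (Matrix (Fin 3) (Fin 3) ℂ)) : Prop :=
  (∀ g ∈ G, InSUJ g) ∧ (1 : Matrix (Fin 3) (Fin 3) ℂ) ∈ G ∧
    (∀ g ∈ G, ∀ h ∈ G, g * h ∈ G) ∧ (∀ g ∈ G, g⁻¹ ∈ G)

/-- The trace condition: the trace of every loxodromic element of `G` lies in `ℝδ`
for some cubic root of unity `δ`. -/
def TraceCond (G : Set (Matrix (Fin 3) (Fin 3) ℂ)) : Prop :=
  ∀ g ∈ G, Loxodromic g → ∃ δ : ℂ, δ ^ 3 = 1 ∧ ∃ r : ℝ, g.trace = (r : ℂ) * δ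

/-- A real subspace `W ⊆ ℂ³` is `G`-stable. -/
def StableR (G : Set (Matrix (Fin 3) (Fin 3) ℂ)) (W : Submodule ℝ (Fin 3 → ℂ)) : Prop :=
  ∀ g ∈ G, ∀ w ∈ W, g.mulVec w ∈ W

/-- A complex subspace `W ⊆ ℂ³` is `G`-stable. -/
def StableC (G : Set (Matrix (Fin 3) (Fin 3) ℂ)) (W : Submodule ℂ (Fin 3 → ℂ)) : Prop :=
  ∀ g ∈ G, ∀ w ∈ W, g.mulVec w ∈ W

/-- A real subspace `W ⊆ ℂ³` is totally real when the form is real on it. -/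
def TotallyReal (W : Submodule ℝ (Fin 3 → ℂ)) : Prop :=
  ∀ w ∈ W, ∀ w' ∈ W, (herm w w').im = 0

lemma matJ_transpose : matJᵀ = matJ := by
  ext i j
  fin_cases i <;> fin_cases j <;> simp [matJ, Matrix.vecHead, Matrix.vecTail]

lemma herm_eq_dot (x y : Fin 3 → ℂ) : herm x y = x ⬝ᵥ matJ.mulVec (star y) := by
  simp [herm, matJ, mulVec, dotProduct, Fin.sum_univ_three, Matrix.vecHead, Matrix.vecTail]

lemma herm_invariant {g : Matrix (Fin 3) (Fin 3) ℂ} (hg : InSUJ g) (x y : Fin 3 → ℂ) :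
    herm (g.mulVec x) (g.mulVec y) = herm x y := by
  rw [herm_eq_dot, herm_eq_dot, star_mulVec, ← Matrix.mulVec_transpose,
    Matrix.mulVec_mulVec, Matrix.dotProduct_mulVec, ← Matrix.mulVec_transpose,
    Matrix.mulVec_mulVec]
  have key : (matJ * gᴴᵀ)ᵀ * g = matJ := by
    rw [Matrix.transpose_mul, Matrix.transpose_transpose, matJ_transpose, Matrix.mul_assoc,
      ← Matrix.mul_assoc]
    exact hg.2
  rw [key, Matrix.dotProduct_mulVec, ← Matrix.mulVec_transpose, matJ_transpose]

lemma herm_nondeg_right {z : Fin 3 → ℂ} (h : ∀ x, herm x z = 0) : z = 0 := by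
  have h0 := h ![1,0,0]
  have h1 := h ![0,1,0]
  have h2 := h ![0,0,1]
  simp [herm] at h0 h1 h2
  funext i
  fin_cases i <;> simp [h0, h1, h2]

lemma herm_add_left (x x' y : Fin 3 → ℂ) : herm (x + x') y = herm x y + herm x' y := by
  simp [herm]; ring

lemma herm_smul_left (c : ℂ) (x y : Fin 3 → ℂ) : herm (c • x) y = c * herm x y := by
  simp [herm]; ring

lemma herm_add_right (x y y' : Fin 3 → ℂ) : herm x (y + y') = herm x y + herm x y' := by
  simp [herm]; ring

lemma herm_smul_right (c : ℂ) (x y : Fin 3 → ℂ) : herm x (c • y) = star c * herm x y := by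
  simp [herm]; ring

lemma herm_sub_right (x y y' : Fin 3 → ℂ) : herm x (y - y') = herm x y - herm x y' := by
  simp [herm]; ring




/-- The `herm`-orthogonal complement (on the left) of a complex subspace. -/
noncomputable def hermOrth (P : Submodule ℂ (Fin 3 → ℂ)) : Submodule ℂ (Fin 3 → ℂ) where
  carrier := {x | ∀ y ∈ P, herm x y = 0}
  add_mem' := fun hx hx' y hy => by
    rw [herm_add_left, hx y hy, hx' y hy, add_zero]
  zero_mem' := fun y hy => by simp [herm]
  smul_mem' := fun c x hx y hy => by rw [herm_smul_left, hx y hy, mul_zero]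

lemma mem_hermOrth {P : Submodule ℂ (Fin 3 → ℂ)} {x} :
    x ∈ hermOrth P ↔ ∀ y ∈ P, herm x y = 0 := Iff.rfl

lemma stableC_hermOrth {G : Set (Matrix (Fin 3) (Fin 3) ℂ)} (hG : IsSubgroupOfSUJ G)
    {P : Submodule ℂ (Fin 3 → ℂ)} (hP : StableC G P) : StableC G (hermOrth P) := by
  intro g hg x hx y hy
  have hU : IsUnit g.det := by rw [(hG.1 g hg).1]; exact isUnit_one
  have hy' : g.mulVec (g⁻¹.mulVec y) = y := by
    rw [Matrix.mulVec_mulVec, Matrix.mul_nonsing_inv _ hU, Matrix.one_mulVec]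
  calc herm (g.mulVec x) y = herm (g.mulVec x) (g.mulVec (g⁻¹.mulVec y)) := by rw [hy']
    _ = herm x (g⁻¹.mulVec y) := herm_invariant (hG.1 g hg) _ _
    _ = 0 := hx _ (hP g⁻¹ (hG.2.2.2 g hg) y hy)

/-- `herm ·  y` as a linear functional. -/
noncomputable def hermFun (y : Fin 3 → ℂ) : (Fin 3 → ℂ) →ₗ[ℂ] ℂ where
  toFun x := herm x y
  map_add' x x' := herm_add_left x x' y
  map_smul' c x := herm_smul_left c x y

lemma finrank_complex_pi3 : Module.finrank ℂ (Fin 3 → ℂ) = 3 := by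
  simp [Module.finrank_pi]

lemma finrank_hermOrth_of_plane {P : Submodule ℂ (Fin 3 → ℂ)}
    (hP2 : Module.finrank ℂ P = 2) : Module.finrank ℂ (hermOrth P) = 1 := by
  classical
  have b : Module.Basis (Fin 2) ℂ P := Module.finBasisOfFinrankEq ℂ P hP2
  set v : Fin 2 → (Fin 3 → ℂ) := fun i => (b i : Fin 3 → ℂ) with hv
  have li : LinearIndependent ℂ v :=
    b.linearIndependent.map' P.subtype (Submodule.ker_subtype P)
  set Φ : (Fin 3 → ℂ) →ₗ[ℂ] (Fin 2 → ℂ) := LinearMap.pi (fun i => hermFun (v i)) with hΦ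
  have hΦapp : ∀ x i, Φ x i = herm x (v i) := fun x i => rfl
  -- surjectivity of Φ
  have hsurj : Function.Surjective Φ := by
    by_contra hns
    have hlt : LinearMap.range Φ < ⊤ :=
      lt_top_iff_ne_top.2 (fun h => hns (LinearMap.range_eq_top.1 h))
    have hfr : Module.finrank ℂ (LinearMap.range Φ) < 2 := by
      have := Submodule.finrank_lt (K := ℂ) (V := Fin 2 → ℂ) hlt.ne
      simpa [Module.finrank_pi] using this
    have hprin : (LinearMap.range Φ).IsPrincipal :=
      (Submodule.finrank_le_one_iff_isPrincipal _).1 (by omega)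
    obtain ⟨w, hw⟩ := hprin.principal
    -- every Φ x is a multiple of w
    have hmul : ∀ x : Fin 3 → ℂ, ∃ c : ℂ, Φ x = c • w := by
      intro x
      have : Φ x ∈ LinearMap.range Φ := LinearMap.mem_range_self _ _
      rw [hw, Submodule.mem_span_singleton] at this
      obtain ⟨c, hc⟩ := this
      exact ⟨c, hc.symm⟩
    set z : Fin 3 → ℂ := star (w 1) • v 0 - star (w 0) • v 1 with hz
    have hz0 : z = 0 := by
      apply herm_nondeg_right
      intro x
      obtain ⟨c, hc⟩ := hmul x
      have h0 : herm x (v 0) = c * w 0 := by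
        have := congrFun hc 0; simpa [hΦapp] using this
      have h1 : herm x (v 1) = c * w 1 := by
        have := congrFun hc 1; simpa [hΦapp] using this
      rw [hz, herm_sub_right, herm_smul_right, herm_smul_right, h0, h1]
      simp
      ring
    have hw0 : star (w 1) = 0 ∧ star (w 0) = 0 := by
      have := Fintype.linearIndependent_iff.1 li ![star (w 1), -(star (w 0))] ?_
      · exact ⟨this 0, by simpa using this 1⟩
      · rw [Fin.sum_univ_two]
        simpa [hz, sub_eq_add_neg] using hz0
    have hv0 : v 0 = 0 := by
      apply herm_nondeg_right
      intro x
      obtain ⟨c, hc⟩ := hmul x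
      have h0 : herm x (v 0) = c * w 0 := by
        have := congrFun hc 0; simpa [hΦapp] using this
      rw [h0, show w 0 = 0 from by simpa using congrArg star hw0.2, mul_zero]
    exact li.ne_zero 0 hv0
  -- kernel of Φ is hermOrth P
  have hker : LinearMap.ker Φ = hermOrth P := by
    ext x
    simp only [LinearMap.mem_ker, mem_hermOrth]
    constructor
    · intro h y hy
      have hrepr : (⟨y, hy⟩ : P) = b.repr ⟨y, hy⟩ 0 • b 0 + b.repr ⟨y, hy⟩ 1 • b 1 := by
        have := b.sum_repr ⟨y, hy⟩
        rw [Fin.sum_univ_two] at this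
        exact this.symm
      have hyv : y = b.repr ⟨y, hy⟩ 0 • v 0 + b.repr ⟨y, hy⟩ 1 • v 1 := by
        have := congrArg (Subtype.val) hrepr
        simp only [Submodule.coe_add, SetLike.val_smul] at this
        exact this
      have e0 : herm x (v 0) = 0 := by have := congrFun h 0; simpa [hΦapp] using this
      have e1 : herm x (v 1) = 0 := by have := congrFun h 1; simpa [hΦapp] using this
      rw [hyv, herm_add_right, herm_smul_right, herm_smul_right, e0, e1]
      simp
    · intro h
      funext i
      rw [hΦapp]
      exact h (v i) (b i).2
  have hrn := LinearMap.finrank_range_add_finrank_ker Φ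
  rw [LinearMap.range_eq_top.2 hsurj, hker, finrank_complex_pi3] at hrn
  have htop : Module.finrank ℂ (⊤ : Submodule ℂ (Fin 2 → ℂ)) = 2 := by
    simp [Module.finrank_pi]
  omega

lemma stable_finrank {G : Set (Matrix (Fin 3) (Fin 3) ℂ)} (hG : IsSubgroupOfSUJ G)
    (hNoLine : ¬ ∃ L : Submodule ℂ (Fin 3 → ℂ), Module.finrank ℂ L = 1 ∧ StableC G L)
    (M : Submodule ℂ (Fin 3 → ℂ)) (hM : StableC G M) :
    Module.finrank ℂ M = 0 ∨ Module.finrank ℂ M = 3 := by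
  have hle : Module.finrank ℂ M ≤ 3 := by
    have := Submodule.finrank_le M
    rwa [finrank_complex_pi3] at this
  interval_cases h : Module.finrank ℂ M
  · exact Or.inl rfl
  · exact absurd ⟨M, h, hM⟩ hNoLine
  · exact absurd ⟨hermOrth M, finrank_hermOrth_of_plane h, stableC_hermOrth hG hM⟩ hNoLine
  · exact Or.inr rfl

/-- Multiplication by `I` as a real-linear equivalence. -/
noncomputable def Imul : (Fin 3 → ℂ) ≃ₗ[ℝ] (Fin 3 → ℂ) where
  toFun x := Complex.I • x
  invFun x := -(Complex.I • x)
  map_add' x y := smul_add _ x y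
  map_smul' r x := smul_comm _ r x
  left_inv x := by
    show -(Complex.I • Complex.I • x) = x
    rw [smul_smul, Complex.I_mul_I, neg_smul, one_smul, neg_neg]
  right_inv x := by
    show Complex.I • -(Complex.I • x) = x
    rw [smul_neg, smul_smul, Complex.I_mul_I, neg_smul, one_smul, neg_neg]

/-- A real subspace closed under multiplication by `I`, as a complex subspace. -/
noncomputable def complexify (U : Submodule ℝ (Fin 3 → ℂ))
    (hU : ∀ x ∈ U, Complex.I • x ∈ U) : Submodule ℂ (Fin 3 → ℂ) where
  carrier := U
  add_mem' := fun h h' => U.add_mem h h'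
  zero_mem' := U.zero_mem
  smul_mem' := fun c x hx => by
    have key : c • x = c.re • x + c.im • (Complex.I • x) := by
      funext i
      simp only [Pi.add_apply, Pi.smul_apply, Complex.real_smul, smul_eq_mul]
      linear_combination (x i) * (Complex.re_add_im c).symm
    rw [key]
    exact U.add_mem (U.smul_mem _ hx) (U.smul_mem _ (hU x hx))

lemma complexify_restrictScalars (U : Submodule ℝ (Fin 3 → ℂ))
    (hU : ∀ x ∈ U, Complex.I • x ∈ U) :
    (complexify U hU).restrictScalars ℝ = U := by
  ext x; exact Iff.rfl

lemma finrank_real_restrictScalars (M : Submodule ℂ (Fin 3 → ℂ)) :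
    Module.finrank ℝ (M.restrictScalars ℝ) = 2 * Module.finrank ℂ M := by
  have h := Module.finrank_mul_finrank ℝ ℂ M
  rw [Complex.finrank_real_complex] at h
  exact h.symm

lemma finrank_complexify (U : Submodule ℝ (Fin 3 → ℂ))
    (hU : ∀ x ∈ U, Complex.I • x ∈ U) :
    Module.finrank ℝ U = 2 * Module.finrank ℂ (complexify U hU) := by
  have h := finrank_real_restrictScalars (complexify U hU)
  rwa [complexify_restrictScalars U hU] at h


theorem statement_8 (G : Set (Matrix (Fin 3) (Fin 3) ℂ))
    (hG : IsSubgroupOfSUJ G)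
    (hNoLine : ¬ ∃ L : Submodule ℂ (Fin 3 → ℂ), Module.finrank ℂ L = 1 ∧ StableC G L) :
    ∀ W : Submodule ℝ (Fin 3 → ℂ), StableR G W →
      Module.finrank ℝ W = 0 ∨ Module.finrank ℝ W = 3 ∨ Module.finrank ℝ W = 6 := by
  intro W hW
  set W' : Submodule ℝ (Fin 3 → ℂ) := W.map (Imul.toLinearMap) with hW'def
  have hmem' : ∀ x, x ∈ W' ↔ ∃ w ∈ W, Complex.I • w = x := by
    intro x
    rw [hW'def, Submodule.mem_map]
    rfl
  have hW'rank : Module.finrank ℝ W' = Module.finrank ℝ W := by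
    rw [hW'def, LinearEquiv.finrank_map_eq]
  have hW'stab : StableR G W' := by
    intro g hg x hx
    obtain ⟨w, hw, rfl⟩ := (hmem' x).1 hx
    refine (hmem' _).2 ⟨g.mulVec w, hW g hg w hw, ?_⟩
    rw [Matrix.mulVec_smul]
  have hIinf : ∀ x ∈ W ⊓ W', Complex.I • x ∈ W ⊓ W' := by
    rintro x ⟨hxW, hxW'⟩
    obtain ⟨w, hw, rfl⟩ := (hmem' x).1 hxW'
    constructor
    · have : Complex.I • Complex.I • w = -w := by
        rw [smul_smul, Complex.I_mul_I, neg_smul, one_smul]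
      rw [this]
      exact W.neg_mem hw
    · exact (hmem' _).2 ⟨Complex.I • w, hxW, rfl⟩
  have hIsup : ∀ x ∈ W ⊔ W', Complex.I • x ∈ W ⊔ W' := by
    intro x hx
    obtain ⟨y, hy, z, hz, rfl⟩ := Submodule.mem_sup.1 hx
    obtain ⟨w, hw, rfl⟩ := (hmem' z).1 hz
    refine Submodule.mem_sup.2 ⟨-w, W.neg_mem hw, Complex.I • y, (hmem' _).2 ⟨y, hy, rfl⟩, ?_⟩
    rw [smul_add, smul_smul, Complex.I_mul_I, neg_smul, one_smul, add_comm]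
  have hStabInf : StableC G (complexify (W ⊓ W') hIinf) := by
    rintro g hg w hw
    exact ⟨hW g hg w hw.1, hW'stab g hg w hw.2⟩
  have hStabSup : StableC G (complexify (W ⊔ W') hIsup) := by
    intro g hg w hw
    have hw' : w ∈ W ⊔ W' := hw
    obtain ⟨y, hy, z, hz, rfl⟩ := Submodule.mem_sup.1 hw'
    show g.mulVec (y + z) ∈ W ⊔ W'
    rw [Matrix.mulVec_add]
    exact Submodule.add_mem _ (Submodule.mem_sup_left (hW g hg y hy))
      (Submodule.mem_sup_right (hW'stab g hg z hz))
  have h1 := stable_finrank hG hNoLine _ hStabInf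
  have h2 := stable_finrank hG hNoLine _ hStabSup
  have e1 := finrank_complexify (W ⊓ W') hIinf
  have e2 := finrank_complexify (W ⊔ W') hIsup
  have hsum := Submodule.finrank_sup_add_finrank_inf_eq W W'
  rw [e1, e2, hW'rank] at hsum
  rcases h1 with h1 | h1 <;> rcases h2 with h2 | h2 <;> rw [h1, h2] at hsum <;> omega
end

section
/- Let G be a subgroup of SU(J) such that tr g ∈ ℝ for all g ∈ G, G contains a loxodromic element, and there is no G-stable 1-dimensional complex subspace of ℂ³. If W is a G-stable real subspace of ℂ³ with real dimension 3, then W is totally real, i.e. ⟨w,w'⟩ ∈ ℝ for all w, w' ∈ W. -/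
open Matrix Polynomial

/- ### Auxiliary lemmas -/

lemma herm_self_im (x : Fin 3 → ℂ) : (herm x x).im = 0 := by
  simp [herm, Complex.add_im, Complex.mul_im]; ring

lemma herm_swap (x y : Fin 3 → ℂ) : herm y x = star (herm x y) := by
  simp [herm, star_add, star_mul']; ring

/-- The imaginary part of `herm` as a real bilinear form. -/
noncomputable def Bf : (Fin 3 → ℂ) →ₗ[ℝ] (Fin 3 → ℂ) →ₗ[ℝ] ℝ :=
  LinearMap.mk₂ ℝ (fun x y => (herm x y).im)
    (fun x x' y => by
      simp only [herm, Pi.add_apply, add_mul, Complex.add_im]; ring)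
    (fun r x y => by
      simp only [herm, Pi.smul_apply, Complex.real_smul, Complex.add_im, Complex.mul_im,
        Complex.mul_re, Complex.ofReal_re, Complex.ofReal_im, smul_eq_mul]; ring)
    (fun x y y' => by
      simp only [herm, Pi.add_apply, star_add, mul_add, Complex.add_im]; ring)
    (fun r x y => by
      simp only [herm, Pi.smul_apply, Complex.real_smul, star_mul', Complex.star_def,
        Complex.conj_ofReal, Complex.add_im, Complex.mul_im, Complex.mul_re, Complex.ofReal_re,
        Complex.ofReal_im, smul_eq_mul]; ring)

lemma Bf_apply (x y : Fin 3 → ℂ) : Bf x y = (herm x y).im := rfl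

lemma Bf_skew (x y : Fin 3 → ℂ) : Bf y x = - Bf x y := by
  simp [Bf_apply, herm_swap x y]

lemma Bf_self (x : Fin 3 → ℂ) : Bf x x = 0 := herm_self_im x

lemma matJ_star (i j : Fin 3) : star (matJ i j) = matJ i j := by
  fin_cases i <;> fin_cases j <;> simp [matJ, Matrix.vecHead, Matrix.vecTail]

lemma matJ_rel (g : Matrix (Fin 3) (Fin 3) ℂ) (hg : gᴴ * matJ * g = matJ) (i j : Fin 3) :
    g 0 i * star (g 0 j) + g 1 i * star (g 2 j) + g 2 i * star (g 1 j) = matJ i j := by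
  have h2 := congrArg star (congrFun (congrFun hg i) j)
  simp only [Matrix.mul_apply, Fin.sum_univ_three, Matrix.conjTranspose_apply,
    star_add, star_mul', star_star, matJ_star] at h2
  have e0 : matJ 0 0 = 1 := by simp [matJ, Matrix.vecHead, Matrix.vecTail]
  have e1 : matJ 1 0 = 0 := by simp [matJ, Matrix.vecHead, Matrix.vecTail]
  have e2 : matJ 2 0 = 0 := by simp [matJ, Matrix.vecHead, Matrix.vecTail]
  have e3 : matJ 0 1 = 0 := by simp [matJ, Matrix.vecHead, Matrix.vecTail]
  have e4 : matJ 1 1 = 0 := by simp [matJ, Matrix.vecHead, Matrix.vecTail]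
  have e5 : matJ 2 1 = 1 := by simp [matJ, Matrix.vecHead, Matrix.vecTail]
  have e6 : matJ 0 2 = 0 := by simp [matJ, Matrix.vecHead, Matrix.vecTail]
  have e7 : matJ 1 2 = 1 := by simp [matJ, Matrix.vecHead, Matrix.vecTail]
  have e8 : matJ 2 2 = 0 := by simp [matJ, Matrix.vecHead, Matrix.vecTail]
  rw [e0,e1,e2,e3,e4,e5,e6,e7,e8] at h2
  rw [← h2]; ring

lemma herm_mulVec (g : Matrix (Fin 3) (Fin 3) ℂ) (hg : gᴴ * matJ * g = matJ) (x y : Fin 3 → ℂ) :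
    herm (g.mulVec x) (g.mulVec y) = herm x y := by
  have k : ∀ i j, g 0 i * star (g 0 j) + g 1 i * star (g 2 j) + g 2 i * star (g 1 j) = matJ i j :=
    matJ_rel g hg
  have k00 := k 0 0; have k01 := k 0 1; have k02 := k 0 2
  have k10 := k 1 0; have k11 := k 1 1; have k12 := k 1 2
  have k20 := k 2 0; have k21 := k 2 1; have k22 := k 2 2
  simp only [show matJ 0 0 = 1 by simp [matJ, Matrix.vecHead, Matrix.vecTail],
    show matJ 0 1 = 0 by simp [matJ, Matrix.vecHead, Matrix.vecTail],
    show matJ 0 2 = 0 by simp [matJ, Matrix.vecHead, Matrix.vecTail],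
    show matJ 1 0 = 0 by simp [matJ, Matrix.vecHead, Matrix.vecTail],
    show matJ 1 1 = 0 by simp [matJ, Matrix.vecHead, Matrix.vecTail],
    show matJ 1 2 = 1 by simp [matJ, Matrix.vecHead, Matrix.vecTail],
    show matJ 2 0 = 0 by simp [matJ, Matrix.vecHead, Matrix.vecTail],
    show matJ 2 1 = 1 by simp [matJ, Matrix.vecHead, Matrix.vecTail],
    show matJ 2 2 = 0 by simp [matJ, Matrix.vecHead, Matrix.vecTail]]
      at k00 k01 k02 k10 k11 k12 k20 k21 k22
  simp only [herm, Matrix.mulVec, dotProduct, Fin.sum_univ_three, star_add, star_mul']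
  linear_combination x 0 * star (y 0) * k00 + x 0 * star (y 1) * k01 + x 0 * star (y 2) * k02 +
    x 1 * star (y 0) * k10 + x 1 * star (y 1) * k11 + x 1 * star (y 2) * k12 +
    x 2 * star (y 0) * k20 + x 2 * star (y 1) * k21 + x 2 * star (y 2) * k22

theorem statement_9 (G : Set (Matrix (Fin 3) (Fin 3) ℂ))
    (hG : IsSubgroupOfSUJ G)
    (hTr : ∀ g ∈ G, ∃ t : ℝ, g.trace = (t : ℂ))
    (hLox : ∃ g ∈ G, Loxodromic g)
    (hNoLine : ¬ ∃ L : Submodule ℂ (Fin 3 → ℂ), Module.finrank ℂ L = 1 ∧ StableC G L)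
    (W : Submodule ℝ (Fin 3 → ℂ)) (hW : StableR G W)
    (hdim : Module.finrank ℝ W = 3) :
    TotallyReal W := by
  obtain ⟨hmem, -, -, hinvG⟩ := hG
  by_contra hcon
  unfold TotallyReal at hcon
  push_neg at hcon
  obtain ⟨w₀, hw₀, w₀', hw₀', hne⟩ := hcon
  have hBinv : ∀ g ∈ G, ∀ x y : Fin 3 → ℂ, Bf (g.mulVec x) (g.mulVec y) = Bf x y := by
    intro g hg x y
    rw [Bf_apply, Bf_apply, herm_mulVec g (hmem g hg).2]
  -- the radical of `Bf` restricted to `W`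
  let R : Submodule ℝ (Fin 3 → ℂ) :=
    { carrier := {v | v ∈ W ∧ ∀ w ∈ W, Bf v w = 0}
      add_mem' := fun {a b} ha hb => ⟨W.add_mem ha.1 hb.1, fun w hw => by
        rw [map_add, LinearMap.add_apply, ha.2 w hw, hb.2 w hw, add_zero]⟩
      zero_mem' := ⟨W.zero_mem, fun w hw => by rw [map_zero, LinearMap.zero_apply]⟩
      smul_mem' := fun r v hv => ⟨W.smul_mem r hv.1, fun w hw => by
        rw [_root_.map_smul, LinearMap.smul_apply, hv.2 w hw, smul_zero]⟩ }
  have hRmem : ∀ v : Fin 3 → ℂ, v ∈ R ↔ v ∈ W ∧ ∀ w ∈ W, Bf v w = 0 := fun v => Iff.rfl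
  have hRW : R ≤ W := fun v hv => ((hRmem v).mp hv).1
  -- stability of the radical
  have hstabR : ∀ g ∈ G, ∀ v ∈ R, g.mulVec v ∈ R := by
    intro g hgG v hv
    rw [hRmem] at hv
    rw [hRmem]
    refine ⟨hW g hgG v hv.1, fun w hw => ?_⟩
    have hdet : IsUnit g.det := by rw [(hmem g hgG).1]; exact isUnit_one
    have hid : g.mulVec (g⁻¹.mulVec w) = w := by
      rw [Matrix.mulVec_mulVec, Matrix.mul_nonsing_inv g hdet, Matrix.one_mulVec]
    calc Bf (g.mulVec v) w = Bf (g.mulVec v) (g.mulVec (g⁻¹.mulVec w)) := by rw [hid]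
      _ = Bf v (g⁻¹.mulVec w) := hBinv g hgG _ _
      _ = 0 := hv.2 _ (hW g⁻¹ (hinvG g hgG) w hw)
  -- a nonzero vector in the radical, via the skew-symmetric Gram matrix
  let b : Module.Basis (Fin 3) ℝ W := Module.finBasisOfFinrankEq ℝ W hdim
  let A : Matrix (Fin 3) (Fin 3) ℝ := Matrix.of fun i j => Bf (b i : Fin 3 → ℂ) (b j : Fin 3 → ℂ)
  have hA : ∀ i j, A i j = Bf (b i : Fin 3 → ℂ) (b j : Fin 3 → ℂ) := fun i j => rfl
  have hdetA : A.det = 0 := by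
    have h1 : Aᵀ = -A := by
      ext i j
      rw [Matrix.transpose_apply, Matrix.neg_apply, hA, hA, Bf_skew]
    have h2 : A.det = -A.det := by
      conv_lhs => rw [← Matrix.det_transpose, h1]
      rw [Matrix.det_neg]
      norm_num
    linarith
  obtain ⟨c, hc0, hc⟩ := Matrix.exists_mulVec_eq_zero_iff.mpr hdetA
  set vv : W := ∑ j, c j • b j with hvv
  set v : Fin 3 → ℂ := (vv : Fin 3 → ℂ) with hvdef
  have hvW : v ∈ W := vv.2
  have hvne : v ≠ 0 := by
    intro h
    have hvv0 : vv = 0 := by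
      apply Subtype.ext; exact h
    have := Fintype.linearIndependent_iff.mp b.linearIndependent c (hvv.symm.trans hvv0)
    exact hc0 (funext this)
  have hvcoe : v = ∑ j, c j • (b j : Fin 3 → ℂ) := by
    rw [hvdef, hvv]
    push_cast [Submodule.coe_sum]
    rfl
  have key : ∀ i, Bf (b i : Fin 3 → ℂ) v = 0 := by
    intro i
    rw [hvcoe, map_sum]
    have hmv := congrFun hc i
    simp only [Matrix.mulVec, dotProduct, Fin.sum_univ_three, Pi.zero_apply, hA] at hmv
    simp only [_root_.map_smul, smul_eq_mul, Fin.sum_univ_three]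
    linear_combination hmv
  have keyW : ∀ w ∈ W, Bf w v = 0 := by
    intro w hw
    have hrep := b.sum_repr ⟨w, hw⟩
    have hwcoe : w = ∑ i, b.repr ⟨w, hw⟩ i • (b i : Fin 3 → ℂ) := by
      have h1 : w = ((∑ i, b.repr ⟨w, hw⟩ i • b i : W) : Fin 3 → ℂ) :=
        congrArg Subtype.val hrep.symm
      conv_lhs => rw [h1]
      push_cast [Submodule.coe_sum]
      rfl
    rw [hwcoe, map_sum, LinearMap.sum_apply]
    simp [_root_.map_smul, LinearMap.smul_apply, key, smul_eq_mul]
  have hvR : v ∈ R := by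
    rw [hRmem]
    exact ⟨hvW, fun w hw => by rw [Bf_skew w v, keyW w hw, neg_zero]⟩
  have hw₀R : w₀ ∉ R := fun h => hne (((hRmem w₀).mp h).2 w₀' hw₀')
  have hRlt : R < W := lt_of_le_of_ne hRW (fun h => hw₀R (h ▸ hw₀))
  have hfr3 : Module.finrank ℝ R < 3 := by
    have := Submodule.finrank_lt_finrank_of_lt hRlt
    rwa [hdim] at this
  have hspanvR : Submodule.span ℝ {v} ≤ R :=
    Submodule.span_le.mpr (Set.singleton_subset_iff.mpr hvR)
  have hfr1 : 1 ≤ Module.finrank ℝ R := by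
    rw [← finrank_span_singleton (K := ℝ) hvne]
    exact Submodule.finrank_mono hspanvR
  have hfr : Module.finrank ℝ R = 1 ∨ Module.finrank ℝ R = 2 := by omega
  rcases hfr with hfr | hfr
  · -- radical is a real line, giving a stable complex line: contradiction
    have hReq : Submodule.span ℝ {v} = R :=
      Submodule.eq_of_le_of_finrank_le hspanvR
        (by rw [finrank_span_singleton (K := ℝ) hvne, hfr])
    apply hNoLine
    refine ⟨Submodule.span ℂ {v}, finrank_span_singleton (K := ℂ) hvne, ?_⟩
    intro g hgG w hwL
    obtain ⟨a, rfl⟩ := Submodule.mem_span_singleton.mp hwL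
    rw [Matrix.mulVec_smul]
    apply Submodule.smul_mem
    have hgv : g.mulVec v ∈ Submodule.span ℝ {v} := by
      rw [hReq]; exact hstabR g hgG v hvR
    obtain ⟨r, hr⟩ := Submodule.mem_span_singleton.mp hgv
    exact Submodule.mem_span_singleton.mpr
      ⟨(r : ℂ), by rw [← hr]; ext k; simp [Complex.real_smul]⟩
  · -- radical has codimension one in `W`, so `Bf` vanishes on `W`: contradiction
    have hSW : R ⊔ Submodule.span ℝ {w₀} ≤ W :=
      sup_le hRW (Submodule.span_le.mpr (Set.singleton_subset_iff.mpr hw₀))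
    have hRS : R < R ⊔ Submodule.span ℝ {w₀} :=
      lt_of_le_of_ne le_sup_left (fun h => hw₀R
        (h ▸ Submodule.mem_sup_right (Submodule.mem_span_singleton_self w₀)))
    have h2' : 2 < Module.finrank ℝ (R ⊔ Submodule.span ℝ {w₀} : Submodule ℝ (Fin 3 → ℂ)) := by
      have := Submodule.finrank_lt_finrank_of_lt hRS
      rwa [hfr] at this
    have hSeq : R ⊔ Submodule.span ℝ {w₀} = W :=
      Submodule.eq_of_le_of_finrank_le hSW (by rw [hdim]; omega)
    have hw₀'S : w₀' ∈ R ⊔ Submodule.span ℝ {w₀} := by rw [hSeq]; exact hw₀'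
    obtain ⟨r', hr'R, s', hs', hsum⟩ := Submodule.mem_sup.mp hw₀'S
    obtain ⟨a, rfl⟩ := Submodule.mem_span_singleton.mp hs'
    apply hne
    have : (herm w₀ w₀').im = Bf w₀ w₀' := rfl
    rw [this, ← hsum, map_add, _root_.map_smul, Bf_skew r' w₀, ((hRmem r').mp hr'R).2 w₀ hw₀,
      Bf_self, neg_zero, smul_zero, add_zero]
end

section
/- Let G be a subgroup of GL(3,ℂ) such that ℂ³, viewed as a 6-dimensional real vector space, has no G-stable real subspace other than 0 and ℂ³ itself. Then the real linear span of G inside the algebra of 3×3 complex matrices is the whole matrix algebra M₃(ℂ). -/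
open Matrix Polynomial

private abbrev MM : Type := Matrix (Fin 3) (Fin 3) ℂ
private abbrev VV : Type := Fin 3 → ℂ

private lemma span_mul_mem {R A : Type*} [CommSemiring R] [Semiring A] [Algebra R A]
    {G : Set A} (hG : ∀ g ∈ G, ∀ h ∈ G, g * h ∈ G)
    {a b : A} (ha : a ∈ Submodule.span R G) (hb : b ∈ Submodule.span R G) :
    a * b ∈ Submodule.span R G := by
  have h2 : Submodule.span R G * Submodule.span R G ≤ Submodule.span R G := by
    rw [Submodule.span_mul_span]
    exact Submodule.span_le.2 (fun x hx => by
      rw [Set.mem_mul] at hx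
      obtain ⟨g, hg, h, hh, rfl⟩ := hx
      exact Submodule.subset_span (hG g hg h hh))
  exact h2 (Submodule.mul_mem_mul ha hb)

private lemma exists_mulVec_ne_zero {T : MM} (hT : T ≠ 0) : ∃ u, T *ᵥ u ≠ 0 := by
  by_contra h
  push_neg at h
  apply hT
  ext i j
  have := congrFun (h (Pi.single j 1)) i
  simpa [Matrix.mulVec_single] using this

/-- orbit lemma -/
private lemma st10_orbit (G : Set MM) (hone : (1:MM) ∈ G)
    (hmul : ∀ g ∈ G, ∀ h ∈ G, g * h ∈ G)
    (hirrC : ∀ W : Submodule ℂ VV, (∀ g ∈ G, ∀ w ∈ W, g *ᵥ w ∈ W) → W = ⊥ ∨ W = ⊤)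
    (v : VV) (hv : v ≠ 0) (w : VV) :
    ∃ b ∈ Submodule.span ℂ G, b *ᵥ v = w := by
  set B := Submodule.span ℂ G with hBdef
  have hGB : G ⊆ B := Submodule.subset_span
  let W : Submodule ℂ VV :=
    { carrier := {w | ∃ b ∈ B, b *ᵥ v = w}
      add_mem' := by
        rintro x y ⟨b, hb, rfl⟩ ⟨c, hc, rfl⟩
        exact ⟨b + c, B.add_mem hb hc, by rw [Matrix.add_mulVec]⟩
      zero_mem' := ⟨0, B.zero_mem, by simp⟩
      smul_mem' := by
        rintro z x ⟨b, hb, rfl⟩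
        exact ⟨z • b, B.smul_mem z hb, by rw [Matrix.smul_mulVec]⟩ }
  have hst : ∀ g ∈ G, ∀ x ∈ W, g *ᵥ x ∈ W := by
    rintro g hg x ⟨b, hb, rfl⟩
    exact ⟨g * b, span_mul_mem hmul (hGB hg) hb, (Matrix.mulVec_mulVec v g b).symm⟩
  rcases hirrC W hst with hbot | htop
  · exfalso
    apply hv
    have hvW : v ∈ W := ⟨1, hGB hone, Matrix.one_mulVec v⟩
    rw [hbot] at hvW
    exact hvW
  · have : w ∈ W := htop.symm ▸ Submodule.mem_top
    exact this

/-- dual orbit lemma -/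
private lemma st10_dual (G : Set MM) (hone : (1:MM) ∈ G)
    (hmul : ∀ g ∈ G, ∀ h ∈ G, g * h ∈ G)
    (hirrC : ∀ W : Submodule ℂ VV, (∀ g ∈ G, ∀ w ∈ W, g *ᵥ w ∈ W) → W = ⊥ ∨ W = ⊤)
    (y : VV) (hy : y ≠ 0) (q : VV) :
    ∃ b ∈ Submodule.span ℂ G, y ᵥ* b = q := by
  set B := Submodule.span ℂ G with hBdef
  have hGB : G ⊆ B := Submodule.subset_span
  have hsmul : ∀ (z : ℂ) (b : MM), y ᵥ* (z • b) = z • (y ᵥ* b) := by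
    intro z b
    funext j
    simp [Matrix.vecMul, dotProduct, Finset.mul_sum]
    ring_nf
    exact Finset.sum_congr rfl (fun i _ => by ring)
  let U : Submodule ℂ VV :=
    { carrier := {u | ∃ b ∈ B, y ᵥ* b = u}
      add_mem' := by
        rintro u u' ⟨b, hb, rfl⟩ ⟨c, hc, rfl⟩
        exact ⟨b + c, B.add_mem hb hc, by rw [Matrix.vecMul_add]⟩
      zero_mem' := ⟨0, B.zero_mem, by simp⟩
      smul_mem' := by
        rintro z u ⟨b, hb, rfl⟩
        exact ⟨z • b, B.smul_mem z hb, hsmul z b⟩ }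
  let Wp : Submodule ℂ VV :=
    { carrier := {x | ∀ b ∈ B, (y ᵥ* b) ⬝ᵥ x = 0}
      add_mem' := by
        intro x x' hx hx' b hb
        rw [dotProduct_add, hx b hb, hx' b hb, add_zero]
      zero_mem' := by
        intro b hb
        simp
      smul_mem' := by
        intro z x hx b hb
        rw [dotProduct_smul, hx b hb, smul_zero] }
  have hWpst : ∀ g ∈ G, ∀ x ∈ Wp, g *ᵥ x ∈ Wp := by
    intro g hg x hx b hb
    rw [dotProduct_mulVec, Matrix.vecMul_vecMul]
    exact hx (b * g) (span_mul_mem hmul hb (hGB hg))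
  have hWpbot : Wp = ⊥ := by
    rcases hirrC Wp hWpst with hbot | htop
    · exact hbot
    · exfalso
      apply hy
      funext j
      have hj : Pi.single j 1 ∈ Wp := htop.symm ▸ Submodule.mem_top
      have := hj 1 (hGB hone)
      simpa [Matrix.vecMul_one, dotProduct_single] using this
  suffices hU : U = ⊤ by
    have : q ∈ U := hU.symm ▸ Submodule.mem_top
    exact this
  by_contra hU
  obtain ⟨C, hC⟩ := Submodule.exists_isCompl U
  have hCne : C ≠ ⊥ := by
    rintro rfl
    apply hU
    simpa using hC.sup_eq_top
  obtain ⟨c₀, hc₀C, hc₀⟩ := Submodule.exists_mem_ne_zero_of_ne_bot hCne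
  obtain ⟨k, hk⟩ : ∃ k, c₀ k ≠ 0 := by
    by_contra h
    push_neg at h
    exact hc₀ (funext h)
  let π := C.projectionOnto U hC.symm
  let φ : VV →ₗ[ℂ] ℂ := (LinearMap.proj k).comp (C.subtype.comp π)
  have hφU : ∀ u ∈ U, φ u = 0 := by
    intro u hu
    have : π u = 0 := Submodule.projectionOnto_apply_right hC.symm ⟨u, hu⟩
    simp [φ, this]
  have hφc : φ c₀ = c₀ k := by
    have : π c₀ = ⟨c₀, hc₀C⟩ := Submodule.projectionOnto_apply_left hC.symm ⟨c₀, hc₀C⟩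
    simp [φ, this]
  let v₀ : VV := fun j => φ (Pi.single j 1)
  have hrepr : ∀ u : VV, φ u = u ⬝ᵥ v₀ := by
    intro u
    conv_lhs => rw [← Finset.univ_sum_single u]
    rw [map_sum]
    simp only [dotProduct]
    refine Finset.sum_congr rfl (fun j _ => ?_)
    have : (Pi.single j (u j) : VV) = (u j) • (Pi.single j 1 : VV) := by
      rw [← Pi.single_smul, smul_eq_mul, mul_one]
    rw [this, φ.map_smul, smul_eq_mul]
  have hv₀ : v₀ ∈ Wp := by
    intro b hb
    rw [← hrepr]
    exact hφU _ ⟨b, hb, rfl⟩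
  rw [hWpbot, Submodule.mem_bot] at hv₀
  apply hk
  rw [← hφc, hrepr, hv₀, dotProduct_zero]


/-- Among nonzero elements of a mult-closed span containing 1 acting irreducibly,
there is one of rank 1. -/
private lemma st10_rank_one (B : Submodule ℂ MM) (h1B : (1:MM) ∈ B)
    (hBmul : ∀ a ∈ B, ∀ b ∈ B, a * b ∈ B)
    (horb : ∀ v : VV, v ≠ 0 → ∀ w : VV, ∃ b ∈ B, b *ᵥ v = w) :
    ∃ T ∈ B, T ≠ 0 ∧ T.rank = 1 := by
  classical
  set S : Set ℕ := {n | ∃ T ∈ B, T ≠ (0:MM) ∧ T.rank = n} with hS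
  have hSne : S.Nonempty := ⟨(1:MM).rank, 1, h1B, one_ne_zero, rfl⟩
  obtain ⟨T, hTB, hT0, hTr⟩ := Nat.sInf_mem hSne
  set r := sInf S with hr
  have hr1 : 1 ≤ r := by
    rcases Nat.eq_zero_or_pos r with h | h
    · exfalso
      rw [h] at hTr
      have hbot : LinearMap.range T.mulVecLin = ⊥ := by
        rw [← Submodule.finrank_eq_zero (R := ℂ)]
        exact hTr
      apply hT0
      ext i j
      have hz : T *ᵥ Pi.single j 1 = 0 := by
        have : T.mulVecLin (Pi.single j 1) ∈ (⊥ : Submodule ℂ VV) := hbot ▸ ⟨_, rfl⟩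
        simpa [Matrix.mulVecLin_apply] using this
      have := congrFun hz i
      simpa [Matrix.mulVec_single] using this
    · exact h
  suffices hr2 : r ≤ 1 by
    exact ⟨T, hTB, hT0, by omega⟩
  by_contra hgt
  push_neg at hgt
  -- r ≥ 2
  obtain ⟨u, hu⟩ := (by
    by_contra h
    push_neg at h
    apply hT0
    ext i j
    have := congrFun (h (Pi.single j 1)) i
    simpa [Matrix.mulVec_single] using this : ∃ u, T *ᵥ u ≠ 0)
  set x := T *ᵥ u with hx
  set E := LinearMap.range T.mulVecLin with hE
  have hxE : x ∈ E := ⟨u, rfl⟩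
  have hrankE : Module.finrank ℂ E = r := hTr
  obtain ⟨v, hv⟩ : ∃ v, T *ᵥ v ∉ Submodule.span ℂ {x} := by
    by_contra h
    push_neg at h
    have hle : E ≤ Submodule.span ℂ {x} := by
      rintro _ ⟨z, rfl⟩
      exact h z
    have := Submodule.finrank_mono hle
    rw [hrankE, finrank_span_singleton hu] at this
    omega
  obtain ⟨S₀, hS₀B, hS₀⟩ := horb x hu v
  have hpres : ∀ w ∈ E, (T * S₀) *ᵥ w ∈ E := by
    rintro _ ⟨z, rfl⟩
    exact ⟨S₀ *ᵥ T.mulVecLin z, by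
      simp only [Matrix.mulVecLin_apply, Matrix.mulVec_mulVec, mul_assoc]⟩
  have : Nontrivial E := nontrivial_of_ne ⟨x, hxE⟩ 0 (by
    simp only [ne_eq, Submodule.mk_eq_zero]; exact hu)
  let ℓ : Module.End ℂ E := ((T * S₀).mulVecLin).restrict (p := E) (q := E) (by
    intro w hw; simpa [Matrix.mulVecLin_apply] using hpres w hw)
  obtain ⟨c, hc⟩ := Module.End.exists_eigenvalue ℓ
  obtain ⟨w₀, hw₀⟩ := hc.exists_hasEigenvector
  set ℓ' : Module.End ℂ E := ℓ - c • 1 with hℓ'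
  have hker : ℓ' w₀ = 0 := by
    simp [hℓ', Module.End.HasEigenvector.apply_eq_smul hw₀, sub_eq_zero]
  set T' : MM := T * S₀ * T - c • T with hT'
  have hT'B : T' ∈ B := B.sub_mem (hBmul _ (hBmul _ hTB _ hS₀B) _ hTB) (B.smul_mem c hTB)
  have hT'0 : T' ≠ 0 := by
    intro h
    apply hv
    have : T' *ᵥ u = 0 := by rw [h]; simp
    rw [hT'] at this
    have h2 : (T * S₀ * T) *ᵥ u = c • (T *ᵥ u) := by
      have := sub_eq_zero.mp (by
        simpa [Matrix.sub_mulVec, Matrix.smul_mulVec] using this)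
      exact this
    have h3 : (T * S₀ * T) *ᵥ u = T *ᵥ v := by
      rw [← hS₀, ← Matrix.mulVec_mulVec, ← Matrix.mulVec_mulVec, ← hx]
    rw [h3, ← hx] at h2
    rw [h2]
    exact Submodule.smul_mem _ _ (Submodule.mem_span_singleton_self x)
  -- rank T' < r
  have hrange : LinearMap.range T'.mulVecLin ≤ Submodule.map E.subtype (LinearMap.range ℓ') := by
    rintro _ ⟨z, rfl⟩
    refine ⟨ℓ' ⟨T *ᵥ z, ⟨z, rfl⟩⟩, ⟨_, rfl⟩, ?_⟩
    show ((ℓ' ⟨T *ᵥ z, _⟩ : E) : VV) = T'.mulVecLin z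
    simp only [hℓ', LinearMap.sub_apply, LinearMap.smul_apply, Module.End.one_apply, hT',
      Matrix.mulVecLin_apply, LinearMap.restrict_apply, ℓ]
    simp [Matrix.sub_mulVec, Matrix.smul_mulVec, Matrix.mulVec_mulVec]
  have hlt : Module.finrank ℂ (LinearMap.range ℓ') < r := by
    have h1 : Module.finrank ℂ (LinearMap.range ℓ') + Module.finrank ℂ (LinearMap.ker ℓ') =
        Module.finrank ℂ E := LinearMap.finrank_range_add_finrank_ker ℓ'
    have h2 : 0 < Module.finrank ℂ (LinearMap.ker ℓ') := by
      refine (Module.finrank_pos_iff (R := ℂ) (M := LinearMap.ker ℓ')).mpr ?_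
      exact nontrivial_of_ne ⟨w₀, hker⟩ 0 (fun h => hw₀.right (congrArg Subtype.val h))
    omega
  have hrankT' : T'.rank < r := by
    calc T'.rank = Module.finrank ℂ (LinearMap.range T'.mulVecLin) := rfl
    _ ≤ Module.finrank ℂ (Submodule.map E.subtype (LinearMap.range ℓ')) :=
        Submodule.finrank_mono hrange
    _ = Module.finrank ℂ (LinearMap.range ℓ') := by
        rw [Submodule.finrank_map_subtype_eq]
    _ < r := hlt
  have : r ≤ T'.rank := Nat.sInf_le ⟨T', hT'B, hT'0, rfl⟩
  omega


/-- from rank-one element plus orbit lemmas, the span is everything. -/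
private lemma st10_top (B : Submodule ℂ MM)
    (hBmul : ∀ a ∈ B, ∀ b ∈ B, a * b ∈ B)
    (horb : ∀ v : VV, v ≠ 0 → ∀ w : VV, ∃ b ∈ B, b *ᵥ v = w)
    (hdual : ∀ y : VV, y ≠ 0 → ∀ q : VV, ∃ b ∈ B, y ᵥ* b = q)
    (T : MM) (hTB : T ∈ B) (hT0 : T ≠ 0) (hTr : T.rank = 1) : B = ⊤ := by
  classical
  obtain ⟨u, hu⟩ : ∃ u, T *ᵥ u ≠ 0 := by
    by_contra h
    push_neg at h
    apply hT0
    ext i j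
    have := congrFun (h (Pi.single j 1)) i
    simpa [Matrix.mulVec_single] using this
  set x := T *ᵥ u with hx
  have hxE : x ∈ LinearMap.range T.mulVecLin := ⟨u, rfl⟩
  have hrange : LinearMap.range T.mulVecLin = Submodule.span ℂ {x} := by
    refine (Submodule.eq_of_le_of_finrank_le ?_ ?_).symm
    · rw [Submodule.span_le, Set.singleton_subset_iff]; exact hxE
    · rw [finrank_span_singleton hu]
      exact le_of_eq hTr
  -- every column of T is a multiple of x
  obtain ⟨i₀, hi₀⟩ : ∃ i₀, x i₀ ≠ 0 := by
    by_contra h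
    push_neg at h
    exact hu (funext h)
  set y : VV := fun j => T i₀ j / x i₀ with hy
  have hTxy : ∀ i j, T i j = x i * y j := by
    intro i j
    have hcol : T *ᵥ Pi.single j 1 ∈ Submodule.span ℂ {x} := hrange ▸ ⟨_, rfl⟩
    obtain ⟨c, hc⟩ := Submodule.mem_span_singleton.mp hcol
    have hc' : ∀ i, T i j = c * x i := by
      intro i
      have := congrFun hc i
      simp only [Matrix.mulVec_single, Pi.smul_apply, smul_eq_mul, mul_one,
        MulOpposite.op_one, one_smul, Matrix.col, Matrix.transpose_apply] at this
      exact this.symm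
    have hcy : y j = c := by
      rw [hy]
      field_simp [hc' i₀]
      rw [hc' i₀]; ring
    rw [hc' i, hcy]
    ring
  have hy0 : y ≠ 0 := by
    intro h
    apply hT0
    ext i j
    rw [hTxy i j, h]
    simp
  -- outer products are in B
  have houter : ∀ p q : VV, Matrix.of (fun i j => p i * q j) ∈ B := by
    intro p q
    obtain ⟨S₀, hS₀B, hS₀⟩ := horb x hu p
    obtain ⟨R₀, hR₀B, hR₀⟩ := hdual y hy0 q
    have key : S₀ * T * R₀ = Matrix.of (fun i j => p i * q j) := by
      ext i j
      have hST : ∀ l, (S₀ * T) i l = p i * y l := by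
        intro l
        rw [← hS₀]
        simp only [Matrix.mul_apply, Matrix.mulVec, dotProduct]
        rw [Finset.sum_mul]
        refine Finset.sum_congr rfl (fun k _ => ?_)
        rw [hTxy k l]
        ring
      simp only [Matrix.mul_apply, Matrix.of_apply]
      calc ∑ l, (S₀ * T) i l * R₀ l j = ∑ l, p i * (y l * R₀ l j) := by
            refine Finset.sum_congr rfl (fun l _ => ?_)
            rw [hST l]; ring
        _ = p i * ∑ l, y l * R₀ l j := by rw [Finset.mul_sum]
        _ = p i * q j := by
            rw [← hR₀]
            simp only [Matrix.vecMul, dotProduct]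
    rw [← key]
    exact hBmul _ (hBmul _ hS₀B _ hTB) _ hR₀B
  -- conclude
  rw [eq_top_iff]
  intro m _
  rw [Matrix.matrix_eq_sum_single m]
  refine Submodule.sum_mem B (fun i _ => Submodule.sum_mem B (fun j _ => ?_))
  have : Matrix.single i j (m i j) =
      Matrix.of (fun a b => (Pi.single i (m i j) : VV) a * (Pi.single j 1 : VV) b) := by
    ext a b
    simp only [Matrix.single, Matrix.of_apply, Pi.single_apply]
    by_cases hai : i = a <;> by_cases hbj : j = b <;>
      simp [hai, hbj, eq_comm] <;> tauto
  rw [this]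
  exact houter _ _


private noncomputable def ctau (m : MM) : MM := m.map (starRingEnd ℂ)

private lemma ctau_mul (m n : MM) : ctau (m * n) = ctau m * ctau n := Matrix.map_mul
private lemma ctau_add (m n : MM) : ctau (m + n) = ctau m + ctau n := by
  ext i j; simp [ctau]
private lemma ctau_ctau (m : MM) : ctau (ctau m) = m := by
  ext i j; simp [ctau]
private lemma ctau_zero : ctau 0 = 0 := by ext i j; simp [ctau]
private lemma ctau_smul (z : ℂ) (m : MM) : ctau (z • m) = (starRingEnd ℂ z) • ctau m := by
  ext i j; simp [ctau]
private lemma ctau_smulR (r : ℝ) (m : MM) : ctau (r • m) = r • ctau m := by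
  ext i j; simp [ctau, Complex.conj_ofReal]

private lemma coeMM (t : ℝ) (x : MM) : (t : ℂ) • x = t • x := by
  rw [← algebraMap_smul ℂ t x]; norm_num

private lemma st10_realform (A : Submodule ℝ MM)
    (hmulA : ∀ a ∈ A, ∀ b ∈ A, a * b ∈ A)
    (hdec : ∀ m : MM, ∃ a ∈ A, ∃ b ∈ A, m = a + Complex.I • b)
    (hJ : ∀ x ∈ A, Complex.I • x ∈ A → x = 0) :
    ∃ P : MM, P * ctau P = 1 ∧ ∀ a ∈ A, P * ctau a = a * P := by
  classical
  set I := Complex.I with hIdef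
  -- uniqueness of decompositions
  have huniq : ∀ a ∈ A, ∀ b ∈ A, ∀ a' ∈ A, ∀ b' ∈ A,
      a + I • b = a' + I • b' → a = a' ∧ b = b' := by
    intro a ha b hb a' ha' b' hb' heq
    have hx : a - a' = I • (b' - b) := by
      rw [smul_sub]
      rw [sub_eq_sub_iff_add_eq_add]
      rw [heq]; abel
    have hxA : a - a' ∈ A := A.sub_mem ha ha'
    have hIx : I • (a - a') ∈ A := by
      rw [hx, smul_smul, Complex.I_mul_I, neg_one_smul, neg_sub]
      exact A.sub_mem hb hb'
    have h0 : a - a' = 0 := hJ _ hxA hIx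
    have hbb : b = b' := by
      have : I • (b' - b) = 0 := by rw [← hx, h0]
      have h2 : b' - b = 0 := by
        rw [smul_eq_zero] at this
        exact this.resolve_left Complex.I_ne_zero
      have := sub_eq_zero.mp h2
      exact this.symm
    exact ⟨by rw [← sub_eq_zero]; exact h0, hbb⟩
  choose da hdaA db hdbA hdspec using hdec
  set σ : MM → MM := fun m => da m - I • db m with hσdef
  have hσap : ∀ m, σ m = da m - I • db m := fun m => rfl
  have hsig : ∀ (m x y : MM), x ∈ A → y ∈ A → m = x + I • y → σ m = x - I • y := by
    intro m x y hx hy hm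
    obtain ⟨h1, h2⟩ := huniq (da m) (hdaA m) (db m) (hdbA m) x hx y hy (by rw [← hdspec m, hm])
    rw [hσap, h1, h2]
  have hsigA : ∀ x ∈ A, σ x = x := by
    intro x hx
    have := hsig x x 0 hx A.zero_mem (by simp)
    simpa using this
  have hadd : ∀ m n, σ (m + n) = σ m + σ n := by
    intro m n
    have h := hsig (m + n) (da m + da n) (db m + db n) (A.add_mem (hdaA m) (hdaA n))
      (A.add_mem (hdbA m) (hdbA n)) (by rw [smul_add]; nth_rewrite 1 [hdspec m, hdspec n]; abel)
    rw [h, hσap, hσap, smul_add]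
    abel
  have hsmulR : ∀ (r : ℝ) m, σ (r • m) = r • σ m := by
    intro r m
    have h := hsig (r • m) (r • da m) (r • db m) (A.smul_mem r (hdaA m)) (A.smul_mem r (hdbA m))
      (by nth_rewrite 1 [hdspec m]; rw [smul_add, smul_comm])
    rw [h, hσap, smul_sub, smul_comm]
  have hI : ∀ m, σ (I • m) = -(I • σ m) := by
    intro m
    have hd : I • m = (-(db m)) + I • da m := by
      nth_rewrite 1 [hdspec m]
      rw [smul_add, smul_smul, Complex.I_mul_I, neg_one_smul]
      abel
    have h := hsig (I • m) (-(db m)) (da m) (A.neg_mem (hdbA m)) (hdaA m) hd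
    rw [h, hσap, smul_sub, smul_smul, Complex.I_mul_I, neg_one_smul]
    abel
  have hprod : ∀ a b c d : MM, (a + I • b) * (c + I • d) = (a*c - b*d) + I • (a*d + b*c) := by
    intro a b c d
    rw [mul_add, add_mul, add_mul, mul_smul_comm, smul_mul_assoc, smul_mul_assoc,
      mul_smul_comm, smul_smul, Complex.I_mul_I, neg_one_smul, smul_add]
    abel
  have hmulσ : ∀ m n, σ (m * n) = σ m * σ n := by
    intro m n
    have hd : m * n = (da m * da n - db m * db n) + I • (da m * db n + db m * da n) := by
      nth_rewrite 1 [hdspec m, hdspec n]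
      exact hprod _ _ _ _
    have h := hsig (m * n) _ _
      (A.sub_mem (hmulA _ (hdaA m) _ (hdaA n)) (hmulA _ (hdbA m) _ (hdbA n)))
      (A.add_mem (hmulA _ (hdaA m) _ (hdbA n)) (hmulA _ (hdbA m) _ (hdaA n))) hd
    rw [h, hσap, hσap]
    have h2 : (da m + I • (-(db m))) * (da n + I • (-(db n))) =
        (da m * da n - (-(db m)) * (-(db n))) + I • (da m * (-(db n)) + (-(db m)) * da n) :=
      hprod _ _ _ _
    simp only [smul_neg, neg_mul, mul_neg, neg_neg] at h2
    rw [show da m - I • db m = da m + -(I • db m) by abel,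
        show da n - I • db n = da n + -(I • db n) by abel, h2]
    simp only [smul_add, smul_neg]
    abel
  have hsigsig : ∀ m, σ (σ m) = m := by
    intro m
    have hd : σ m = da m + I • (-(db m)) := by rw [hσap, smul_neg]; abel
    have h := hsig (σ m) (da m) (-(db m)) (hdaA m) (A.neg_mem (hdbA m)) hd
    rw [h, smul_neg, sub_neg_eq_add, ← hdspec m]
  have hsmulC : ∀ (z : ℂ) m, σ (z • m) = (starRingEnd ℂ z) • σ m := by
    intro z m
    have hcoe : ∀ (r : ℝ) (x : MM), (r : ℂ) • x = r • x := fun r x => by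
      rw [← algebraMap_smul ℂ r x]; norm_num
    have h1 : z • m = z.re • m + z.im • (I • m) := by
      calc z • m = ((z.re : ℂ) + (z.im : ℂ) * I) • m := by rw [Complex.re_add_im]
        _ = (z.re : ℂ) • m + (z.im : ℂ) • (I • m) := by rw [add_smul, ← smul_smul]
        _ = z.re • m + z.im • (I • m) := by rw [hcoe, hcoe]
    have h2 : (starRingEnd ℂ z) • σ m = z.re • σ m + z.im • (-(I • σ m)) := by
      have hz : (starRingEnd ℂ z) = (z.re : ℂ) + (z.im : ℂ) * (-I) := by
        simp [hIdef, Complex.ext_iff]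
      rw [hz, add_smul, ← smul_smul, hcoe, hcoe, neg_smul]
    rw [h1, hadd, hsmulR, hsmulR, hI, h2]
  -- the conjugate-linear ring endomorphism ρ
  set ρ : MM → MM := fun m => σ (ctau m) with hρdef
  have hρap : ∀ m, ρ m = σ (ctau m) := fun _ => rfl
  have hρmul : ∀ m n, ρ (m * n) = ρ m * ρ n := by
    intro m n; rw [hρap, hρap, hρap, ctau_mul]; exact hmulσ _ _
  have hρadd : ∀ m n, ρ (m + n) = ρ m + ρ n := by
    intro m n; rw [hρap, hρap, hρap, ctau_add]; exact hadd _ _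
  have hρsmul : ∀ (z : ℂ) m, ρ (z • m) = z • ρ m := by
    intro z m; rw [hρap, hρap, ctau_smul, hsmulC]; simp
  have hρzero : ρ 0 = 0 := by
    rw [hρap, ctau_zero]; exact hsigA 0 A.zero_mem
  have hρinj : ∀ m, ρ m = 0 → m = 0 := by
    intro m h
    rw [hρap] at h
    have h2 : σ (σ (ctau m)) = σ 0 := by rw [h]
    rw [hsigsig, hsigA 0 A.zero_mem] at h2
    have := congrArg ctau h2
    rwa [ctau_ctau, ctau_zero] at this
  -- the standard matrix units
  set E : Fin 3 → Fin 3 → MM := fun i j => Matrix.single i j (1:ℂ) with hEdef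
  have hEmul : ∀ i j k : Fin 3, ρ (E i j) * ρ (E k 0) =
      if j = k then ρ (E i 0) else 0 := by
    intro i j k
    rw [← hρmul]
    by_cases h : j = k
    · subst h
      rw [if_pos rfl, hEdef]
      simp only []
      rw [Matrix.single_mul_single_same, one_mul]
    · rw [if_neg h, hEdef]
      simp only []
      rw [Matrix.single_mul_single_of_ne (h := h), hρzero]
  have hE00 : E 0 0 ≠ 0 := by
    intro h
    have := congrFun (congrFun h 0) 0
    simp [hEdef, Matrix.single] at this
  have hf0 : ρ (E 0 0) ≠ 0 := fun h => hE00 (hρinj _ h)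
  obtain ⟨v₀, hv₀⟩ : ∃ v₀, ρ (E 0 0) *ᵥ v₀ ≠ 0 := by
    by_contra h
    push_neg at h
    apply hf0
    ext i j
    have := congrFun (h (Pi.single j 1)) i
    simpa [Matrix.mulVec_single] using this
  set u : Fin 3 → VV := fun k => ρ (E k 0) *ᵥ v₀ with hudef
  set P : MM := Matrix.of (fun i k => u k i) with hPdef
  have hPcol : ∀ (c : VV), P *ᵥ c = ∑ k, c k • u k := by
    intro c
    funext a
    simp only [Matrix.mulVec, dotProduct, hPdef, Matrix.of_apply, Finset.sum_apply,
      Pi.smul_apply, smul_eq_mul]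
    exact Finset.sum_congr rfl (fun k _ => by ring)
  have hmulP : ∀ m : MM, ∀ a k, (m * P) a k = (m *ᵥ u k) a := by
    intro m a k
    simp only [Matrix.mul_apply, Matrix.mulVec, dotProduct, hPdef, Matrix.of_apply]
  have key1 : ∀ i j, ρ (E i j) * P = P * E i j := by
    intro i j
    ext a k
    rw [hmulP]
    have h1 : (ρ (E i j) *ᵥ u k) a = ((ρ (E i j) * ρ (E k 0)) *ᵥ v₀) a := by
      rw [← Matrix.mulVec_mulVec]
    have h2 : (P * E i j) a k = if j = k then u i a else 0 := by
      simp only [Matrix.mul_apply, hPdef, Matrix.of_apply, hEdef, Matrix.single,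
        Matrix.of_apply]
      rw [Finset.sum_eq_single i]
      · by_cases h : j = k <;> simp [h]
      · intro b _ hb
        simp [Ne.symm hb]
      · intro h
        exact absurd (Finset.mem_univ i) h
    rw [h1, h2, hEmul]
    by_cases h : j = k
    · subst h
      rw [if_pos rfl, if_pos rfl]
    · rw [if_neg h, if_neg h, Matrix.zero_mulVec]
      rfl
  have key2 : ∀ m : MM, ρ m * P = P * m := by
    intro m
    have hms : m = ∑ i, ∑ j, (m i j) • E i j := by
      conv_lhs => rw [Matrix.matrix_eq_sum_single m]
      refine Finset.sum_congr rfl (fun i _ => Finset.sum_congr rfl (fun j _ => ?_))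
      rw [hEdef, Matrix.smul_single, smul_eq_mul, mul_one]
    have hρsum : ρ m = ∑ i, ∑ j, (m i j) • ρ (E i j) := by
      conv_lhs => rw [hms]
      rw [show (∑ i, ∑ j, (m i j) • E i j) = ∑ i, (∑ j, (m i j) • E i j) from rfl]
      have hadd' : ∀ (s : Finset (Fin 3)) (f : Fin 3 → MM),
          ρ (∑ i ∈ s, f i) = ∑ i ∈ s, ρ (f i) := by
        intro s f
        induction s using Finset.induction_on with
        | empty => simpa using hρzero
        | insert _ _ hx ih =>
          rw [Finset.sum_insert hx, Finset.sum_insert hx, hρadd, ih]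
      rw [hadd']
      refine Finset.sum_congr rfl (fun i _ => ?_)
      rw [hadd']
      exact Finset.sum_congr rfl (fun j _ => hρsmul _ _)
    rw [hρsum]
    conv_rhs => rw [hms]
    rw [Finset.sum_mul, Matrix.mul_sum]
    refine Finset.sum_congr rfl (fun i _ => ?_)
    rw [Finset.sum_mul, Matrix.mul_sum]
    refine Finset.sum_congr rfl (fun j _ => ?_)
    rw [smul_mul_assoc, mul_smul_comm, key1]
  -- P is invertible
  have huj : ∀ j, u j ≠ 0 := by
    intro j h
    apply hv₀
    have h1 : ρ (E 0 j) *ᵥ u j = 0 := by rw [h, Matrix.mulVec_zero]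
    have h2 : ρ (E 0 j) *ᵥ u j = (ρ (E 0 j) * ρ (E j 0)) *ᵥ v₀ := by
      rw [← Matrix.mulVec_mulVec]
    rw [h2, hEmul, if_pos rfl] at h1
    exact h1
  have hPdet : P.det ≠ 0 := by
    intro hdet
    obtain ⟨c, hc0, hPc⟩ := (Matrix.exists_mulVec_eq_zero_iff).mpr hdet
    apply hc0
    funext j
    have h1 : ρ (E j j) *ᵥ (P *ᵥ c) = 0 := by rw [hPc, Matrix.mulVec_zero]
    rw [Matrix.mulVec_mulVec, key1, ← Matrix.mulVec_mulVec] at h1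
    have h2 : E j j *ᵥ c = Pi.single j (c j) := by
      funext i
      simp only [hEdef, Matrix.mulVec, dotProduct, Matrix.single,
        Matrix.of_apply, Pi.single_apply, ite_mul, one_mul, zero_mul, ite_and]
      by_cases h : j = i
      · simp [h, Finset.sum_ite_eq]
      · simp [h, Ne.symm h]
    rw [h2] at h1
    have h3 : P *ᵥ Pi.single j (c j) = c j • u j := by
      funext a
      rw [Matrix.mulVec_single]
      simp only [hPdef, Matrix.of_apply, Pi.smul_apply, smul_eq_mul, Matrix.col,
        Matrix.transpose_apply, op_smul_eq_mul]
      ring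
    rw [h3] at h1
    rcases smul_eq_zero.mp h1 with h | h
    · exact h
    · exact absurd h (huj j)
  have hPne : P ≠ 0 := by
    intro h
    apply hPdet
    rw [h, Matrix.det_zero]
  -- σ m * P = P * ctau m
  have hsigP : ∀ m, σ m * P = P * ctau m := by
    intro m
    have := key2 (ctau m)
    rwa [hρap, ctau_ctau] at this
  -- Q = P * ctau P is central
  set Q : MM := P * ctau P with hQdef
  have hQcomm : ∀ m, m * Q = Q * m := by
    intro m
    have h1 : σ m * P = P * ctau m := hsigP m
    have h2 : m * P = P * ctau (σ m) := by
      have := hsigP (σ m)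
      rwa [hsigsig] at this
    have h3 : ctau (σ m) * ctau P = ctau P * m := by
      have := congrArg ctau h1
      rwa [ctau_mul, ctau_mul, ctau_ctau] at this
    calc m * Q = (m * P) * ctau P := by rw [hQdef, mul_assoc]
      _ = P * (ctau (σ m) * ctau P) := by rw [h2, mul_assoc]
      _ = P * (ctau P * m) := by rw [h3]
      _ = Q * m := by rw [hQdef, mul_assoc]
  obtain ⟨lam, hlam⟩ : ∃ lam : ℂ, Q = lam • 1 := by
    have hcomm : Pairwise fun i j : Fin 3 => Commute (Matrix.single i j (1:ℂ)) Q := by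
      intro i j _
      exact hQcomm _
    obtain ⟨lam, hlam⟩ := Matrix.mem_range_scalar_of_commute_single hcomm
    refine ⟨lam, ?_⟩
    rw [← hlam]
    ext a b
    simp [Matrix.scalar_apply, Matrix.one_apply, Matrix.diagonal]
  -- lam is real and positive
  have hctauQ : ctau Q = ctau P * P := by
    rw [hQdef, ctau_mul, ctau_ctau]
  have hlamreal : (starRingEnd ℂ) lam = lam := by
    have h1 : P * ctau Q = Q * P := by
      rw [hctauQ, hQdef, mul_assoc]
    have h2 : ctau Q = (starRingEnd ℂ lam) • 1 := by
      rw [hlam]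
      rw [ctau_smul]
      congr 1
      ext a b
      simp [ctau, Matrix.one_apply]
    rw [h2, hlam] at h1
    rw [mul_smul_comm, smul_mul_assoc, mul_one, one_mul] at h1
    by_contra hne
    apply hPne
    have := sub_eq_zero.mpr h1
    rw [← sub_smul] at this
    rcases smul_eq_zero.mp this with h | h
    · exact absurd (sub_eq_zero.mp h) hne
    · exact h
  set r : ℝ := lam.re with hrdef
  have hlamr : lam = (r : ℂ) := by
    rw [hrdef]
    exact (Complex.conj_eq_iff_re.mp hlamreal).symm
  have hdetQ : (r : ℂ) ^ 3 = Complex.normSq (P.det) := by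
    have h1 : Q.det = lam ^ 3 := by
      rw [hlam, Matrix.det_smul, Matrix.det_one, mul_one]
      norm_num
    have h2 : Q.det = P.det * (starRingEnd ℂ) P.det := by
      rw [hQdef, Matrix.det_mul]
      congr 1
      rw [RingHom.map_det]
      rfl
    rw [← hlamr, ← h1, h2, Complex.mul_conj]
  have hr_pos : 0 < r := by
    have hnsq : 0 < Complex.normSq P.det := Complex.normSq_pos.mpr hPdet
    have h3 : r ^ 3 = Complex.normSq P.det := by
      have := hdetQ
      rw [show ((r:ℂ))^3 = ((r^3 : ℝ) : ℂ) by push_cast; ring] at this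
      exact_mod_cast this
    by_contra hle
    push_neg at hle
    have h4 : r ^ 3 ≤ 0 := Odd.pow_nonpos ⟨1, by norm_num⟩ hle
    linarith [hnsq, h3]
  -- normalize
  set s : ℝ := (Real.sqrt r)⁻¹ with hsdef
  have hs2 : s ^ 2 * r = 1 := by
    rw [hsdef]
    rw [show ((Real.sqrt r)⁻¹) ^ 2 = ((Real.sqrt r) ^ 2)⁻¹ by rw [inv_pow]]
    rw [Real.sq_sqrt hr_pos.le]
    field_simp
  refine ⟨s • P, ?_, ?_⟩
  · rw [ctau_smulR, smul_mul_assoc, mul_smul_comm, smul_smul, ← hQdef, hlam, hlamr,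
      ← coeMM (s * s), smul_smul]
    have hco : ((s * s : ℝ) : ℂ) * (r : ℂ) = 1 := by
      have h5 : (s * s) * r = 1 := by rw [← hs2]; ring
      exact_mod_cast h5
    rw [hco, one_smul]
  · intro a ha
    rw [smul_mul_assoc, mul_smul_comm]
    congr 1
    have := hsigP a
    rw [hsigA a ha] at this
    exact this.symm


private lemma hprodG (a b c d : MM) :
    (a + Complex.I • b) * (c + Complex.I • d)
      = (a * c - b * d) + Complex.I • (a * d + b * c) := by
  rw [mul_add, add_mul, add_mul, mul_smul_comm, smul_mul_assoc, smul_mul_assoc,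
    mul_smul_comm, smul_smul, Complex.I_mul_I, neg_one_smul, smul_add]
  abel

private lemma std_triple (p q k l : Fin 3) (m : MM) :
    Matrix.single p k (1:ℂ) * m * Matrix.single l q (1:ℂ)
      = Matrix.single p q (m k l) := by
  have h1 : Matrix.single p k (1:ℂ) * m
      = Matrix.of (fun a d => if p = a then m k d else 0) := by
    ext a d
    simp only [Matrix.mul_apply, Matrix.single, Matrix.of_apply, ite_and, ite_mul,
      one_mul, zero_mul]
    by_cases h : p = a
    · simp [h, Finset.sum_ite_eq]
    · simp [h]
  have h2 : Matrix.of (fun a d => if p = a then m k d else 0) * Matrix.single l q (1:ℂ)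
      = Matrix.single p q (m k l) := by
    ext a b
    simp only [Matrix.mul_apply, Matrix.single, Matrix.of_apply, ite_and, mul_ite,
      mul_one, mul_zero, ite_mul, zero_mul]
    by_cases hpa : p = a
    · by_cases hqb : q = b
      · simp [hpa, hqb, Finset.sum_ite_eq, Finset.sum_ite_eq']
      · simp [hpa, hqb]
    · simp [hpa]
  rw [h1, h2]

private lemma stdBasis_entry_decomp (p q : Fin 3) (w z : ℂ) (hz : z ≠ 0) :
    Matrix.single p q w = (w/z).re • Matrix.single p q z
      + (w/z).im • Matrix.single p q (Complex.I * z) := by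
  rw [Matrix.smul_single, Matrix.smul_single]
  have : Matrix.single p q ((w/z).re • z) + Matrix.single p q ((w/z).im • (Complex.I * z))
      = Matrix.single p q ((w/z).re • z + (w/z).im • (Complex.I * z)) := by
    ext a b
    simp only [Matrix.single, Matrix.of_apply, Matrix.add_apply]
    split <;> simp
  rw [this]
  congr 1
  have h3 : ((w/z).re : ℂ) * z + ((w/z).im : ℂ) * (Complex.I * z) = (w / z) * z := by
    conv_rhs => rw [← Complex.re_add_im (w/z)]
    ring
  rw [Complex.real_smul, Complex.real_smul, h3, div_mul_cancel₀ w hz]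

private lemma st10_spanC (G : Set MM) (hone : (1:MM) ∈ G)
    (hmul : ∀ g ∈ G, ∀ h ∈ G, g * h ∈ G)
    (hirrC : ∀ W : Submodule ℂ VV, (∀ g ∈ G, ∀ w ∈ W, g *ᵥ w ∈ W) → W = ⊥ ∨ W = ⊤) :
    Submodule.span ℂ G = ⊤ := by
  have hGB : G ⊆ (Submodule.span ℂ G : Submodule ℂ MM) := Submodule.subset_span
  have h1B : (1:MM) ∈ Submodule.span ℂ G := hGB hone
  have hBmul : ∀ a ∈ Submodule.span ℂ G, ∀ b ∈ Submodule.span ℂ G,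
      a * b ∈ Submodule.span ℂ G := fun a ha b hb => span_mul_mem hmul ha hb
  obtain ⟨T, hTB, hT0, hTr⟩ := st10_rank_one _ h1B hBmul (st10_orbit G hone hmul hirrC)
  exact st10_top _ hBmul (st10_orbit G hone hmul hirrC) (st10_dual G hone hmul hirrC) T hTB hT0 hTr

private theorem statement_10' (G : Set MM)
    (hone : (1 : MM) ∈ G)
    (hmul : ∀ g ∈ G, ∀ h ∈ G, g * h ∈ G)
    (hirr : ∀ W : Submodule ℝ VV, (∀ g ∈ G, ∀ w ∈ W, g *ᵥ w ∈ W) → W = ⊥ ∨ W = ⊤) :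
    Submodule.span ℝ G = (⊤ : Submodule ℝ MM) := by
  classical
  have hirrC : ∀ W : Submodule ℂ VV, (∀ g ∈ G, ∀ w ∈ W, g *ᵥ w ∈ W) → W = ⊥ ∨ W = ⊤ := by
    intro W hst
    have := hirr (W.restrictScalars ℝ) (fun g hg w hw => hst g hg w hw)
    rcases this with h | h
    · left; exact (Submodule.restrictScalars_eq_bot_iff ℝ ℂ VV).mp h
    · right; exact (Submodule.restrictScalars_eq_top_iff ℝ ℂ VV).mp h
  have hspanC : Submodule.span ℂ G = ⊤ := st10_spanC G hone hmul hirrC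
  set A : Submodule ℝ MM := Submodule.span ℝ G with hAdef
  have hGA : G ⊆ A := Submodule.subset_span
  have hmulA : ∀ a ∈ A, ∀ b ∈ A, a * b ∈ A := fun a ha b hb => span_mul_mem hmul ha hb
  have hdec : ∀ m : MM, ∃ a ∈ A, ∃ b ∈ A, m = a + Complex.I • b := by
    intro m
    let D : Submodule ℂ MM :=
      { carrier := {m | ∃ a ∈ A, ∃ b ∈ A, m = a + Complex.I • b}
        add_mem' := by
          rintro x y ⟨a, ha, b, hb, rfl⟩ ⟨c, hc, d, hd, rfl⟩
          exact ⟨a + c, A.add_mem ha hc, b + d, A.add_mem hb hd, by rw [smul_add]; abel⟩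
        zero_mem' := ⟨0, A.zero_mem, 0, A.zero_mem, by simp⟩
        smul_mem' := by
          rintro z x ⟨a, ha, b, hb, rfl⟩
          refine ⟨z.re • a - z.im • b, A.sub_mem (A.smul_mem _ ha) (A.smul_mem _ hb),
            z.im • a + z.re • b, A.add_mem (A.smul_mem _ ha) (A.smul_mem _ hb), ?_⟩
          have e1 : z • (a + Complex.I • b) = z • a + (z * Complex.I) • b := by
            rw [smul_add, smul_smul]
          have e2 : z • a = z.re • a + z.im • (Complex.I • a) := by
            calc z • a = ((z.re : ℂ) + (z.im : ℂ) * Complex.I) • a := by rw [Complex.re_add_im]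
              _ = (z.re : ℂ) • a + (z.im : ℂ) • (Complex.I • a) := by rw [add_smul, ← smul_smul]
              _ = z.re • a + z.im • (Complex.I • a) := by rw [coeMM, coeMM]
          have e3 : (z * Complex.I) • b = -(z.im • b) + z.re • (Complex.I • b) := by
            have hzi : z * Complex.I = ((-z.im : ℝ) : ℂ) + (z.re : ℂ) * Complex.I := by
              simp [Complex.ext_iff]
            rw [hzi, add_smul, ← smul_smul, coeMM, coeMM, neg_smul]
          rw [e1, e2, e3, smul_add]
          rw [smul_comm z.im Complex.I a, smul_comm z.re Complex.I b]
          abel }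
    have hGD : G ⊆ D := fun g hg => ⟨g, hGA hg, 0, A.zero_mem, by simp⟩
    have hle : (Submodule.span ℂ G : Submodule ℂ MM) ≤ D := Submodule.span_le.mpr hGD
    rw [hspanC] at hle
    exact hle Submodule.mem_top
  by_cases hex : ∃ m ∈ A, m ≠ 0 ∧ Complex.I • m ∈ A
  · -- the ideal case: A is everything
    obtain ⟨m0, hm0, hm0ne, hIm0⟩ := hex
    obtain ⟨k, l, hkl⟩ : ∃ k l, m0 k l ≠ 0 := by
      by_contra h
      push_neg at h
      exact hm0ne (by ext a b; simpa using h a b)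
    have hx : ∀ x : MM, x ∈ A → Complex.I • x ∈ A → ∀ u v : MM, u * x * v ∈ A := by
      intro x hxA hxIA u v
      obtain ⟨a, haA, b, hbA, hu⟩ := hdec u
      obtain ⟨c, hcA, d, hdA, hv⟩ := hdec v
      have e1 : u * x = (a * x) + Complex.I • (b * x) := by
        rw [hu, add_mul, smul_mul_assoc]
      have e2 : u * x * v = ((a*x)*c - (b*x)*d) + Complex.I • ((a*x)*d + (b*x)*c) := by
        rw [e1, hv]
        exact hprodG _ _ _ _
      have e3 : Complex.I • ((a*x)*d + (b*x)*c)
          = (a*(Complex.I • x))*d + (b*(Complex.I • x))*c := by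
        rw [smul_add, mul_smul_comm, mul_smul_comm, smul_mul_assoc, smul_mul_assoc]
      rw [e2, e3]
      refine A.add_mem (A.sub_mem ?_ ?_) (A.add_mem ?_ ?_)
      · exact hmulA _ (hmulA _ haA _ hxA) _ hcA
      · exact hmulA _ (hmulA _ hbA _ hxA) _ hdA
      · exact hmulA _ (hmulA _ haA _ hxIA) _ hdA
      · exact hmulA _ (hmulA _ hbA _ hxIA) _ hcA
    have hIIm0 : Complex.I • (Complex.I • m0) ∈ A := by
      rw [smul_smul, Complex.I_mul_I, neg_one_smul]
      exact A.neg_mem hm0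
    rw [eq_top_iff]
    intro n _
    rw [Matrix.matrix_eq_sum_single n]
    refine Submodule.sum_mem A (fun p _ => Submodule.sum_mem A (fun q _ => ?_))
    have hXz : Matrix.single p q (m0 k l) ∈ A := by
      rw [← std_triple p q k l m0]
      exact hx m0 hm0 hIm0 _ _
    have hXzi : Matrix.single p q (Complex.I * (m0 k l)) ∈ A := by
      have h1 : Matrix.single p q (Complex.I * m0 k l)
          = Complex.I • Matrix.single p q (m0 k l) := by
        rw [Matrix.smul_single, smul_eq_mul]
      have h2 : Complex.I • (Matrix.single p k 1 * m0 * Matrix.single l q 1)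
          = Matrix.single p k 1 * (Complex.I • m0) * Matrix.single l q 1 := by
        rw [mul_smul_comm, smul_mul_assoc]
      rw [h1, ← std_triple p q k l m0, h2]
      exact hx (Complex.I • m0) hIm0 hIIm0 _ _
    rw [stdBasis_entry_decomp p q (n p q) (m0 k l) hkl]
    exact A.add_mem (A.smul_mem _ hXz) (A.smul_mem _ hXzi)
  · -- no nonzero element of A ∩ iA: contradiction with irreducibility
    push_neg at hex
    have hJ : ∀ x ∈ A, Complex.I • x ∈ A → x = 0 := by
      intro x hxA hIx
      by_contra hne
      exact (hex x hxA hne) hIx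
    obtain ⟨P, hP1, hP2⟩ := st10_realform A hmulA hdec hJ
    have star_mulVec' : ∀ (Q : MM) (w : VV), star (Q *ᵥ w) = ctau Q *ᵥ (star w) := by
      intro Q w
      funext a
      simp only [Matrix.mulVec, dotProduct, Pi.star_apply, ctau, Matrix.map_apply]
      rw [star_sum]
      refine Finset.sum_congr rfl (fun kk _ => ?_)
      rw [star_mul']
      rfl
    let W : Submodule ℝ VV :=
      { carrier := {v | P *ᵥ (star v) = v}
        add_mem' := by
          intro v w hv hw
          have hv' : P *ᵥ star v = v := hv
          have hw' : P *ᵥ star w = w := hw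
          show P *ᵥ star (v + w) = v + w
          rw [star_add, Matrix.mulVec_add, hv', hw']
        zero_mem' := by
          show P *ᵥ star (0:VV) = 0
          simp
        smul_mem' := by
          intro r v hv
          have hv' : P *ᵥ star v = v := hv
          show P *ᵥ star (r • v) = r • v
          rw [star_smul, star_trivial, Matrix.mulVec_smul, hv'] }
    have hWst : ∀ g ∈ G, ∀ v ∈ W, g *ᵥ v ∈ W := by
      intro g hg v hv
      have hv' : P *ᵥ star v = v := hv
      show P *ᵥ star (g *ᵥ v) = g *ᵥ v
      rw [star_mulVec' g v, Matrix.mulVec_mulVec, hP2 g (hGA hg), ← Matrix.mulVec_mulVec, hv']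
    have hJJ : ∀ v : VV, P *ᵥ star (P *ᵥ star v) = v := by
      intro v
      rw [star_mulVec', star_star, Matrix.mulVec_mulVec, hP1, Matrix.one_mulVec]
    exfalso
    set e₀ : VV := Pi.single 0 1 with he₀
    have he₀ne : e₀ ≠ 0 := by
      intro h
      have := congrFun h 0
      simp [he₀] at this
    have hJsmul : ∀ v : VV, P *ᵥ star (Complex.I • v) = -(Complex.I • (P *ᵥ star v)) := by
      intro v
      have h1 : star (Complex.I • v) = (-Complex.I) • star v := by
        rw [star_smul]
        simp [Complex.conj_I]
      rw [h1, Matrix.mulVec_smul, neg_smul]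
    rcases hirr W hWst with hbot | htop
    · have h1 : ∀ v : VV, P *ᵥ star v = -v := by
        intro v
        have hmemW : v + P *ᵥ star v ∈ W := by
          show P *ᵥ star (v + P *ᵥ star v) = v + P *ᵥ star v
          rw [star_add, Matrix.mulVec_add, hJJ v]
          abel
        rw [hbot, Submodule.mem_bot] at hmemW
        exact eq_neg_of_add_eq_zero_right hmemW
      have h2 := h1 (Complex.I • e₀)
      rw [hJsmul e₀, h1 e₀, smul_neg, neg_neg] at h2
      rw [eq_neg_iff_add_eq_zero, ← two_smul ℂ] at h2
      rcases smul_eq_zero.mp h2 with h | h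
      · norm_num at h
      · rcases smul_eq_zero.mp h with h' | h'
        · exact Complex.I_ne_zero h'
        · exact he₀ne h'
    · have h1 : ∀ v : VV, P *ᵥ star v = v := by
        intro v
        have : v ∈ W := htop.symm ▸ Submodule.mem_top
        exact this
      have h2 := h1 (Complex.I • e₀)
      rw [hJsmul e₀, h1 e₀] at h2
      have h3 : Complex.I • e₀ = -(Complex.I • e₀) := h2.symm
      rw [eq_neg_iff_add_eq_zero, ← two_smul ℂ] at h3
      rcases smul_eq_zero.mp h3 with h | h
      · norm_num at h
      · rcases smul_eq_zero.mp h with h' | h'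
        · exact Complex.I_ne_zero h'
        · exact he₀ne h'

theorem statement_10 (G : Set (Matrix (Fin 3) (Fin 3) ℂ))
    (hGL : ∀ g ∈ G, IsUnit g)
    (hone : (1 : Matrix (Fin 3) (Fin 3) ℂ) ∈ G)
    (hmul : ∀ g ∈ G, ∀ h ∈ G, g * h ∈ G)
    (hinv : ∀ g ∈ G, g⁻¹ ∈ G)
    (hirr : ∀ W : Submodule ℝ (Fin 3 → ℂ), StableR G W → W = ⊥ ∨ W = ⊤) :
    Submodule.span ℝ G = (⊤ : Submodule ℝ (Matrix (Fin 3) (Fin 3) ℂ)) := by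
  apply statement_10' G hone hmul
  intro W hst
  exact hirr W hst
end

section
/- Let G be a subgroup of GL(3,ℂ) such that tr g ∈ ℝ for every g ∈ G. Then there exists a G-stable real subspace W of ℂ³ (viewed as a 6-dimensional real vector space) with 0 ≠ W ≠ ℂ³. -/
open Matrix Polynomial

open Matrix Polynomial

noncomputable section AuxSN

/-- entrywise conjugation of a matrix -/
def mconj (x : Matrix (Fin 3) (Fin 3) ℂ) : Matrix (Fin 3) (Fin 3) ℂ :=
  x.map (starRingEnd ℂ)

lemma mconj_apply (x : Matrix (Fin 3) (Fin 3) ℂ) (i j : Fin 3) :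
    mconj x i j = starRingEnd ℂ (x i j) := rfl

lemma mconj_mul (x y : Matrix (Fin 3) (Fin 3) ℂ) : mconj (x * y) = mconj x * mconj y :=
  Matrix.map_mul

lemma mconj_mconj (x : Matrix (Fin 3) (Fin 3) ℂ) : mconj (mconj x) = x := by
  ext i j; simp [mconj]

lemma mconj_add (x y : Matrix (Fin 3) (Fin 3) ℂ) : mconj (x + y) = mconj x + mconj y := by
  ext i j; simp [mconj]

lemma mconj_sum {ι : Type*} (s : Finset ι) (f : ι → Matrix (Fin 3) (Fin 3) ℂ) :
    mconj (∑ i ∈ s, f i) = ∑ i ∈ s, mconj (f i) := by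
  ext i j; simp [mconj, Finset.sum_apply, Matrix.sum_apply]

lemma mconj_smul (c : ℂ) (x : Matrix (Fin 3) (Fin 3) ℂ) :
    mconj (c • x) = (starRingEnd ℂ c) • mconj x := by
  ext i j; simp [mconj]

lemma mconj_one : mconj 1 = (1 : Matrix (Fin 3) (Fin 3) ℂ) := by
  ext i j; by_cases h : i = j <;> simp [mconj, Matrix.one_apply, h]

lemma mconj_eq_zero {x : Matrix (Fin 3) (Fin 3) ℂ} (h : mconj x = 0) : x = 0 := by
  ext i j
  have := congrFun (congrFun h i) j
  simpa [mconj] using congrArg (starRingEnd ℂ) this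

lemma mconj_mulVec (x : Matrix (Fin 3) (Fin 3) ℂ) (v : Fin 3 → ℂ) :
    (mconj x).mulVec (star v) = star (x.mulVec v) := by
  funext i
  simp only [Matrix.mulVec, dotProduct, mconj, Matrix.map_apply, Pi.star_apply]
  rw [star_sum]
  exact Finset.sum_congr rfl fun j _ => by simp

/-- mulVec as a linear map in the matrix argument -/
def mvr (v : Fin 3 → ℂ) : Matrix (Fin 3) (Fin 3) ℂ →ₗ[ℂ] (Fin 3 → ℂ) where
  toFun x := x.mulVec v
  map_add' x y := Matrix.add_mulVec x y v
  map_smul' c x := Matrix.smul_mulVec c x v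

/-- vecMul as a linear map in the matrix argument -/
def mvl (f : Fin 3 → ℂ) : Matrix (Fin 3) (Fin 3) ℂ →ₗ[ℂ] (Fin 3 → ℂ) where
  toFun x := Matrix.vecMul f x
  map_add' x y := Matrix.vecMul_add x y f
  map_smul' c x := by
    funext j
    simp only [Matrix.vecMul, dotProduct, Matrix.smul_apply, RingHom.id_apply,
      Pi.smul_apply, smul_eq_mul, Finset.mul_sum]
    exact Finset.sum_congr rfl fun k _ => by ring

lemma trace_mul_std (x : Matrix (Fin 3) (Fin 3) ℂ) (i j : Fin 3) :
    (x * Matrix.single j i (1:ℂ)).trace = x i j := by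
  simp [Matrix.trace, Matrix.diag, Matrix.mul_apply, Matrix.single,
    ite_and, Finset.sum_ite_eq, Finset.sum_ite_eq']

lemma sum_std_diag : (Matrix.single 0 0 (1:ℂ)) + Matrix.single 1 1 1 + Matrix.single 2 2 1
    = (1 : Matrix (Fin 3) (Fin 3) ℂ) := by
  ext i j
  fin_cases i <;> fin_cases j <;> simp [Matrix.single, Matrix.one_apply]

end AuxSN

noncomputable section MainSN

variable {G : Set (Matrix (Fin 3) (Fin 3) ℂ)}

lemma spanG_mul (hmul : ∀ g ∈ G, ∀ h ∈ G, g * h ∈ G)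
    (x y : Matrix (Fin 3) (Fin 3) ℂ)
    (hx : x ∈ Submodule.span ℂ G) (hy : y ∈ Submodule.span ℂ G) :
    x * y ∈ Submodule.span ℂ G := by
  induction hx using Submodule.span_induction with
  | mem g hg =>
      induction hy using Submodule.span_induction with
      | mem h hh => exact Submodule.subset_span (hmul g hg h hh)
      | zero => simpa using Submodule.zero_mem (Submodule.span ℂ G)
      | add a b _ _ iha ihb => rw [mul_add]; exact Submodule.add_mem _ iha ihb
      | smul c a _ iha => rw [mul_smul_comm]; exact Submodule.smul_mem _ _ iha
  | zero => simpa using Submodule.zero_mem (Submodule.span ℂ G)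
  | add a b _ _ iha ihb => rw [add_mul]; exact Submodule.add_mem _ iha ihb
  | smul c a _ iha => rw [smul_mul_assoc]; exact Submodule.smul_mem _ _ iha

lemma cstab (hstab : ∀ W : Submodule ℝ (Fin 3 → ℂ), StableR G W → W = ⊥ ∨ W = ⊤)
    (U : Submodule ℂ (Fin 3 → ℂ)) (hU : ∀ g ∈ G, ∀ v ∈ U, g.mulVec v ∈ U) :
    U = ⊥ ∨ U = ⊤ := by
  rcases hstab (U.restrictScalars ℝ) (fun g hg w hw => hU g hg w hw) with h | h
  · left; rw [eq_bot_iff]; intro x hx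
    have hx' : x ∈ U.restrictScalars ℝ := hx
    rw [h] at hx'; simpa using hx'
  · right; rw [eq_top_iff]; intro x _
    have hx' : x ∈ U.restrictScalars ℝ := by rw [h]; trivial
    exact hx'

lemma orbit_top (hone : (1 : Matrix (Fin 3) (Fin 3) ℂ) ∈ G)
    (hmul : ∀ g ∈ G, ∀ h ∈ G, g * h ∈ G)
    (hstab : ∀ W : Submodule ℝ (Fin 3 → ℂ), StableR G W → W = ⊥ ∨ W = ⊤)
    {v : Fin 3 → ℂ} (hv : v ≠ 0) (y : Fin 3 → ℂ) :
    ∃ b ∈ Submodule.span ℂ G, b.mulVec v = y := by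
  set U := Submodule.map (mvr v) (Submodule.span ℂ G) with hUdef
  have hstabU : ∀ g ∈ G, ∀ w ∈ U, g.mulVec w ∈ U := by
    rintro g hg w ⟨b, hb, rfl⟩
    exact ⟨g * b, spanG_mul hmul _ _ (Submodule.subset_span hg) hb,
      (Matrix.mulVec_mulVec v g b).symm⟩
  rcases cstab hstab U hstabU with h | h
  · exfalso
    have hvU : v ∈ U := ⟨1, Submodule.subset_span hone, Matrix.one_mulVec v⟩
    rw [h] at hvU; exact hv (by simpa using hvU)
  · have : y ∈ U := by rw [h]; trivial
    exact this

private lemma sum_dotP {n : ℕ} (s : Finset (Fin n)) (u : Fin n → (Fin 3 → ℂ)) (v : Fin 3 → ℂ) :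
    (∑ i ∈ s, u i) ⬝ᵥ v = ∑ i ∈ s, (u i ⬝ᵥ v) := by
  simp only [dotProduct, Finset.sum_apply, Finset.sum_mul]
  exact Finset.sum_comm

lemma row_top (hone : (1 : Matrix (Fin 3) (Fin 3) ℂ) ∈ G)
    (hmul : ∀ g ∈ G, ∀ h ∈ G, g * h ∈ G)
    (hstab : ∀ W : Submodule ℝ (Fin 3 → ℂ), StableR G W → W = ⊥ ∨ W = ⊤)
    {f : Fin 3 → ℂ} (hf : f ≠ 0) (y : Fin 3 → ℂ) :
    ∃ b ∈ Submodule.span ℂ G, Matrix.vecMul f b = y := by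
  set U := Submodule.map (mvl f) (Submodule.span ℂ G) with hUdef
  set K : Submodule ℂ (Fin 3 → ℂ) :=
    { carrier := {v | ∀ u ∈ U, u ⬝ᵥ v = 0}
      add_mem' := fun ha hb u hu => by
        rw [dotProduct_add, ha u hu, hb u hu, add_zero]
      zero_mem' := fun u hu => dotProduct_zero u
      smul_mem' := fun c v hv u hu => by
        rw [dotProduct_smul, hv u hu, smul_zero] } with hKdef
  have hKstab : ∀ g ∈ G, ∀ v ∈ K, g.mulVec v ∈ K := by
    rintro g hg v hv u ⟨b, hb, rfl⟩
    show Matrix.vecMul f b ⬝ᵥ g.mulVec v = 0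
    rw [dotProduct_mulVec, Matrix.vecMul_vecMul]
    exact hv _ ⟨b * g, spanG_mul hmul _ _ hb (Submodule.subset_span hg), rfl⟩
  have hKbot : K = ⊥ := by
    rcases cstab hstab K hKstab with h | h
    · exact h
    · exfalso; apply hf
      funext j
      have hfK : ∀ v, f ⬝ᵥ v = 0 := by
        intro v
        have hvK : v ∈ K := by rw [h]; trivial
        have := hvK f ⟨1, Submodule.subset_span hone, Matrix.vecMul_one f⟩
        exact this
      have := hfK (Pi.single j 1)
      rw [dotProduct_single] at this
      simpa using this
  have hUtop : U = ⊤ := by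
    by_contra hU
    have hlt : Module.finrank ℂ U < Module.finrank ℂ (Fin 3 → ℂ) :=
      Submodule.finrank_lt hU
    rw [Module.finrank_fin_fun] at hlt
    set n := Module.finrank ℂ U with hn
    set bU := Module.finBasis ℂ U with hbU
    set L : (Fin 3 → ℂ) →ₗ[ℂ] (Fin n → ℂ) := LinearMap.pi (fun i =>
      { toFun := fun v => (bU i : Fin 3 → ℂ) ⬝ᵥ v
        map_add' := fun a b => dotProduct_add _ a b
        map_smul' := fun c a => dotProduct_smul c _ a }) with hL
    have hLnotinj : ¬ Function.Injective L := by
      intro hinj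
      have := LinearMap.finrank_le_finrank_of_injective hinj
      rw [Module.finrank_fin_fun, Module.finrank_fin_fun] at this
      omega
    rw [← LinearMap.ker_eq_bot] at hLnotinj
    obtain ⟨v, hvker, hvne⟩ := Submodule.ne_bot_iff _ |>.mp hLnotinj
    have hvK : v ∈ K := by
      intro u hu
      have hrepr := bU.sum_repr ⟨u, hu⟩
      have hcoe : (∑ i, (bU.repr ⟨u, hu⟩) i • (bU i : Fin 3 → ℂ)) = u := by
        have := congrArg (Subtype.val) hrepr
        refine Eq.trans ?_ this
        rw [Submodule.coe_sum]; simp only [Submodule.coe_smul]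
      rw [← hcoe, sum_dotP]
      apply Finset.sum_eq_zero
      intro i _
      have hLi : (bU i : Fin 3 → ℂ) ⬝ᵥ v = 0 := by
        have := LinearMap.mem_ker.mp hvker
        exact congrFun this i
      rw [smul_dotProduct, hLi, smul_zero]
    rw [hKbot] at hvK
    exact hvne hvK
  have : y ∈ U := by rw [hUtop]; trivial
  exact this

end MainSN

section Part3SN

variable {G : Set (Matrix (Fin 3) (Fin 3) ℂ)}

lemma col_ne_zero {a : Matrix (Fin 3) (Fin 3) ℂ} (ha : a ≠ 0) :
    ∃ v, a.mulVec v ≠ 0 := by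
  by_contra h
  push_neg at h
  apply ha
  ext i j
  have := congrFun (h (Pi.single j 1)) i
  rw [Matrix.mulVec_single] at this
  simpa using this

lemma mul_vecMulVec_mul (b₁ b₂ : Matrix (Fin 3) (Fin 3) ℂ) (u f : Fin 3 → ℂ) :
    b₁ * Matrix.vecMulVec u f * b₂ = Matrix.vecMulVec (b₁.mulVec u) (Matrix.vecMul f b₂) := by
  ext p q
  simp only [Matrix.mul_apply, Matrix.vecMulVec_apply, Matrix.mulVec, Matrix.vecMul,
    dotProduct, Finset.sum_mul, Finset.mul_sum]
  exact Finset.sum_congr rfl fun l _ => Finset.sum_congr rfl fun k _ => by ring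

lemma vecMulVec_single (i j : Fin 3) :
    Matrix.vecMulVec (Pi.single i (1:ℂ)) (Pi.single j (1:ℂ)) = Matrix.single i j 1 := by
  ext p q
  by_cases h1 : p = i <;> by_cases h2 : q = j <;>
    simp_all [Matrix.vecMulVec_apply, Pi.single_apply, Matrix.single, eq_comm]

lemma exists_rank_one (hone : (1 : Matrix (Fin 3) (Fin 3) ℂ) ∈ G)
    (hmul : ∀ g ∈ G, ∀ h ∈ G, g * h ∈ G)
    (hstab : ∀ W : Submodule ℝ (Fin 3 → ℂ), StableR G W → W = ⊥ ∨ W = ⊤) :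
    ∃ a ∈ Submodule.span ℂ G, ∃ u f : Fin 3 → ℂ,
      u ≠ 0 ∧ f ≠ 0 ∧ a = Matrix.vecMulVec u f := by
  classical
  set S : Set ℕ := {n | ∃ a ∈ Submodule.span ℂ G, a ≠ 0 ∧
    Module.finrank ℂ (LinearMap.range (Matrix.mulVecLin a)) = n} with hSdef
  have hSne : S.Nonempty :=
    ⟨_, (1 : Matrix (Fin 3) (Fin 3) ℂ), Submodule.subset_span hone, one_ne_zero, rfl⟩
  set r := sInf S with hrdef
  obtain ⟨a, haspan, hane, hrank⟩ := Nat.sInf_mem hSne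
  rw [← hrdef] at hrank
  have hmin : ∀ b ∈ Submodule.span ℂ G, b ≠ 0 →
      r ≤ Module.finrank ℂ (LinearMap.range (Matrix.mulVecLin b)) :=
    fun b hb hbne => Nat.sInf_le ⟨b, hb, hbne, rfl⟩
  have hrpos : 0 < r := by
    rcases Nat.eq_zero_or_pos r with h0 | h
    swap
    · exact h
    · exfalso
      rw [h0] at hrank
      have hbot : LinearMap.range (Matrix.mulVecLin a) = ⊥ :=
        Submodule.finrank_eq_zero.mp hrank
      obtain ⟨v, hv⟩ := col_ne_zero hane
      apply hv
      have : a.mulVec v ∈ LinearMap.range (Matrix.mulVecLin a) := ⟨v, rfl⟩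
      rw [hbot] at this
      simpa using this
  set R := LinearMap.range (Matrix.mulVecLin a) with hRdef
  have hr1 : r = 1 := by
    by_contra hne1
    have hr2 : 2 ≤ r := by omega
    -- two independent vectors in the range
    set bR := Module.finBasis ℂ R with hbR
    have hcard : 2 ≤ Module.finrank ℂ R := by rw [hrank]; exact hr2
    set i0 : Fin (Module.finrank ℂ R) := ⟨0, by omega⟩ with hi0
    set i1 : Fin (Module.finrank ℂ R) := ⟨1, by omega⟩ with hi1
    have hi01 : i0 ≠ i1 := by
      intro h
      have := congrArg Fin.val h
      simp [hi0, hi1] at this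
    set y₁ : Fin 3 → ℂ := (bR i0 : Fin 3 → ℂ) with hy₁
    have hy₁ne : y₁ ≠ 0 := by
      simp only [hy₁, ne_eq, Submodule.coe_eq_zero]
      exact bR.ne_zero i0
    obtain ⟨u₁, hu₁⟩ := (bR i0).2
    obtain ⟨u₂, hu₂⟩ := (bR i1).2
    rw [Matrix.mulVecLin_apply] at hu₁ hu₂
    obtain ⟨b, hbspan, hb⟩ := orbit_top hone hmul hstab hy₁ne u₂
    have hmaps : ∀ x ∈ R, (a * b).mulVec x ∈ R := by
      rintro x ⟨z, rfl⟩
      rw [Matrix.mulVecLin_apply, Matrix.mulVec_mulVec, mul_assoc, ← Matrix.mulVec_mulVec]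
      exact ⟨_, rfl⟩
    set ψ : Module.End ℂ R := LinearMap.restrict (Matrix.mulVecLin (a * b)) hmaps with hψ
    have : Nontrivial R := Module.nontrivial_of_finrank_pos (R := ℂ) (by omega : 0 < Module.finrank ℂ R)
    obtain ⟨μ, hμ⟩ := Module.End.exists_eigenvalue ψ
    obtain ⟨w, hw⟩ := hμ.exists_hasEigenvector
    have hwapp : ψ w = μ • w := hw.apply_eq_smul
    set a' := a * b * a - μ • a with ha'
    have ha'span : a' ∈ Submodule.span ℂ G :=
      Submodule.sub_mem _ (spanG_mul hmul _ _ (spanG_mul hmul _ _ haspan hbspan) haspan)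
        (Submodule.smul_mem _ _ haspan)
    set χ : Module.End ℂ R := ψ - μ • LinearMap.id with hχ
    have hχw : χ w = 0 := by
      simp [hχ, hwapp]
    have hrange : LinearMap.range (Matrix.mulVecLin a') ≤
        Submodule.map R.subtype (LinearMap.range χ) := by
      rintro y ⟨z, rfl⟩
      rw [Matrix.mulVecLin_apply]
      refine ⟨χ ⟨a.mulVec z, ⟨z, rfl⟩⟩, ⟨_, rfl⟩, ?_⟩
      have hψcoe : (ψ ⟨a.mulVec z, ⟨z, rfl⟩⟩ : Fin 3 → ℂ) = (a * b).mulVec (a.mulVec z) :=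
        LinearMap.restrict_coe_apply _ _ _
      show (χ ⟨a.mulVec z, ⟨z, rfl⟩⟩ : Fin 3 → ℂ) = a'.mulVec z
      have : (χ ⟨a.mulVec z, ⟨z, rfl⟩⟩ : Fin 3 → ℂ)
          = (a * b).mulVec (a.mulVec z) - μ • (a.mulVec z) := by
        simp [hχ, hψcoe]
      rw [this, ha', Matrix.sub_mulVec, Matrix.mulVec_mulVec, Matrix.smul_mulVec,
        mul_assoc]
    have ha'0 : a' = 0 := by
      by_contra ha'ne
      have h1 := hmin a' ha'span ha'ne
      have h2 : Module.finrank ℂ (LinearMap.range (Matrix.mulVecLin a')) ≤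
          Module.finrank ℂ (LinearMap.range χ) := by
        calc Module.finrank ℂ (LinearMap.range (Matrix.mulVecLin a'))
            ≤ Module.finrank ℂ (Submodule.map R.subtype (LinearMap.range χ)) :=
              Submodule.finrank_mono hrange
          _ = Module.finrank ℂ (LinearMap.range χ) :=
              Submodule.finrank_map_subtype_eq R _
      have h3 : Module.finrank ℂ (LinearMap.range χ) + Module.finrank ℂ (LinearMap.ker χ)
          = Module.finrank ℂ R := LinearMap.finrank_range_add_finrank_ker χ
      have h4 : 0 < Module.finrank ℂ (LinearMap.ker χ) := by
        by_contra h4'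
        push_neg at h4'
        have : Module.finrank ℂ (LinearMap.ker χ) = 0 := by omega
        have hbotk : LinearMap.ker χ = ⊥ := Submodule.finrank_eq_zero.mp this
        have : w ∈ LinearMap.ker χ := hχw
        rw [hbotk] at this
        exact hw.2 (by simpa using this)
      rw [hrank] at h3
      omega
    -- now a * b * a = μ • a, contradiction with independence
    have hABA : a * b * a = μ • a := by rwa [sub_eq_zero] at ha'0
    have hcontr : (bR i1 : Fin 3 → ℂ) = μ • (bR i0 : Fin 3 → ℂ) := by
      calc (bR i1 : Fin 3 → ℂ) = a.mulVec u₂ := hu₂.symm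
        _ = (a * b).mulVec y₁ := by rw [← hb, Matrix.mulVec_mulVec]
        _ = (a * b).mulVec (a.mulVec u₁) := by rw [hu₁]
        _ = (a * b * a).mulVec u₁ := by rw [Matrix.mulVec_mulVec]
        _ = (μ • a).mulVec u₁ := by rw [hABA]
        _ = μ • (a.mulVec u₁) := Matrix.smul_mulVec _ _ _
        _ = μ • (bR i0 : Fin 3 → ℂ) := by rw [hu₁]
    have hlift : bR i1 = μ • bR i0 := Subtype.ext (by simpa using hcontr)
    have := congrArg (fun z => (bR.repr z) i1) hlift
    simp [Module.Basis.repr_self, Finsupp.single_apply, hi01.symm, hi01] at this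
  -- r = 1 : extract rank one decomposition
  rw [hr1] at hrank
  obtain ⟨u0, hu0ne, hu0span⟩ := finrank_eq_one_iff'.mp hrank
  set u : Fin 3 → ℂ := (u0 : Fin 3 → ℂ) with hu
  have hune : u ≠ 0 := by simpa [hu, Submodule.coe_eq_zero] using hu0ne
  have hcol : ∀ j, ∃ c : ℂ, a.mulVec (Pi.single j 1) = c • u := by
    intro j
    have hmem : a.mulVec (Pi.single j 1) ∈ R := ⟨Pi.single j 1, rfl⟩
    obtain ⟨c, hc⟩ := hu0span ⟨a.mulVec (Pi.single j 1), hmem⟩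
    exact ⟨c, by
      have := congrArg (Subtype.val) hc
      simpa [hu] using this.symm⟩
  choose fv hfv using hcol
  have afact : a = Matrix.vecMulVec u fv := by
    ext i j
    have h1 := congrFun (hfv j) i
    rw [Matrix.mulVec_single] at h1
    simp at h1
    rw [Matrix.vecMulVec_apply]
    rw [h1]
    simp [mul_comm]
  have hfne : fv ≠ 0 := by
    intro h0
    apply hane
    rw [afact, h0]
    ext i j
    simp [Matrix.vecMulVec_apply]
  exact ⟨a, haspan, u, fv, hune, hfne, afact⟩

lemma burnside (hone : (1 : Matrix (Fin 3) (Fin 3) ℂ) ∈ G)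
    (hmul : ∀ g ∈ G, ∀ h ∈ G, g * h ∈ G)
    (hstab : ∀ W : Submodule ℝ (Fin 3 → ℂ), StableR G W → W = ⊥ ∨ W = ⊤) :
    Submodule.span ℂ G = (⊤ : Submodule ℂ (Matrix (Fin 3) (Fin 3) ℂ)) := by
  obtain ⟨a, haspan, u, f, hu, hf, hafact⟩ := exists_rank_one hone hmul hstab
  rw [eq_top_iff]
  intro x _
  rw [Matrix.matrix_eq_sum_single x]
  apply Submodule.sum_mem
  intro i _
  apply Submodule.sum_mem
  intro j _
  have hsm : Matrix.single i j (x i j) = (x i j) • Matrix.single i j 1 := by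
    rw [Matrix.smul_single, smul_eq_mul, mul_one]
  rw [hsm]
  apply Submodule.smul_mem
  obtain ⟨b₁, hb₁, hb₁u⟩ := orbit_top hone hmul hstab hu (Pi.single i 1)
  obtain ⟨b₂, hb₂, hb₂f⟩ := row_top hone hmul hstab hf (Pi.single j 1)
  have key : b₁ * a * b₂ = Matrix.single i j 1 := by
    rw [hafact, mul_vecMulVec_mul, hb₁u, hb₂f, vecMulVec_single]
  rw [← key]
  exact spanG_mul hmul _ _ (spanG_mul hmul _ _ hb₁ haspan) hb₂

end Part3SN

section Part4SN

variable {G : Set (Matrix (Fin 3) (Fin 3) ℂ)}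

lemma trace_nondeg (hspan : Submodule.span ℂ G = (⊤ : Submodule ℂ (Matrix (Fin 3) (Fin 3) ℂ)))
    {x : Matrix (Fin 3) (Fin 3) ℂ} (hx : ∀ h ∈ G, (x * h).trace = 0) : x = 0 := by
  have hall : ∀ b : Matrix (Fin 3) (Fin 3) ℂ, (x * b).trace = 0 := by
    intro b
    have hb : b ∈ Submodule.span ℂ G := by rw [hspan]; trivial
    induction hb using Submodule.span_induction with
    | mem g hg => exact hx g hg
    | zero => simp
    | add a c _ _ iha ihc => rw [mul_add, Matrix.trace_add, iha, ihc, add_zero]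
    | smul t a _ iha => rw [mul_smul_comm, Matrix.trace_smul, iha, smul_zero]
  ext i j
  have := hall (Matrix.single j i 1)
  rw [trace_mul_std] at this
  simpa using this

lemma real_traces (hmul : ∀ g ∈ G, ∀ h ∈ G, g * h ∈ G)
    (hTr : ∀ g ∈ G, ∃ t : ℝ, g.trace = (t : ℂ)) :
    ∀ g ∈ G, ∀ h ∈ G, starRingEnd ℂ ((g * h).trace) = (g * h).trace := by
  intro g hg h hh
  obtain ⟨t, ht⟩ := hTr _ (hmul g hg h hh)
  rw [ht, Complex.conj_ofReal]

/-- The conjugation intertwiner: a `ℂ`-linear ring homomorphism `θ` on matrices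
extending `g ↦ mconj g` on `G`. -/
lemma exists_theta (hone : (1 : Matrix (Fin 3) (Fin 3) ℂ) ∈ G)
    (hmul : ∀ g ∈ G, ∀ h ∈ G, g * h ∈ G)
    (hTr : ∀ g ∈ G, ∃ t : ℝ, g.trace = (t : ℂ))
    (hspan : Submodule.span ℂ G = (⊤ : Submodule ℂ (Matrix (Fin 3) (Fin 3) ℂ))) :
    ∃ θ : Matrix (Fin 3) (Fin 3) ℂ →ₗ[ℂ] Matrix (Fin 3) (Fin 3) ℂ,
      (∀ g ∈ G, θ g = mconj g) ∧ (∀ x y, θ (x * y) = θ x * θ y) := by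
  classical
  obtain ⟨bset, hbsub, hbspan, hbli⟩ := exists_linearIndependent ℂ G
  have hbspan' : Submodule.span ℂ bset = ⊤ := by rw [hbspan, hspan]
  set bB : Module.Basis bset ℂ (Matrix (Fin 3) (Fin 3) ℂ) :=
    Module.Basis.mk hbli (by rw [Subtype.range_coe]; rw [hbspan']) with hbB
  haveI : Fintype bset := FiniteDimensional.fintypeBasisIndex bB
  set θ : Matrix (Fin 3) (Fin 3) ℂ →ₗ[ℂ] Matrix (Fin 3) (Fin 3) ℂ :=
    bB.constr ℂ (fun k => mconj k.val) with hθ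
  have hbBk : ∀ k : bset, bB k = (k : Matrix (Fin 3) (Fin 3) ℂ) := fun k => Module.Basis.mk_apply _ _ _
  have hθbasis : ∀ k : bset, θ (k : Matrix (Fin 3) (Fin 3) ℂ) = mconj k.val := by
    intro k
    rw [← hbBk k, hθ, Module.Basis.constr_basis, hbBk]
  have hθG : ∀ g ∈ G, θ g = mconj g := by
    intro g hg
    have hrepr : ∑ k, (bB.repr g) k • (k : Matrix (Fin 3) (Fin 3) ℂ) = g := by
      conv_rhs => rw [← bB.sum_repr g]
      exact Finset.sum_congr rfl fun k _ => by rw [hbBk]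
    -- the conjugated combination also represents g, via real traces
    have hkey : ∑ k, starRingEnd ℂ ((bB.repr g) k) • (k : Matrix (Fin 3) (Fin 3) ℂ) = g := by
      have hdiff : (∑ k, starRingEnd ℂ ((bB.repr g) k) • (k : Matrix (Fin 3) (Fin 3) ℂ)) - g
          = 0 := by
        apply trace_nondeg hspan
        intro h hh
        rw [sub_mul, Matrix.trace_sub, Finset.sum_mul, Matrix.trace_sum]
        have htr : ∀ k : bset,
            ((starRingEnd ℂ ((bB.repr g) k) • (k : Matrix (Fin 3) (Fin 3) ℂ)) * h).trace
            = starRingEnd ℂ ((bB.repr g) k) * ((k : Matrix (Fin 3) (Fin 3) ℂ) * h).trace := by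
          intro k
          rw [smul_mul_assoc, Matrix.trace_smul, smul_eq_mul]
        have hgh : (g * h).trace
            = ∑ k, (bB.repr g) k * ((k : Matrix (Fin 3) (Fin 3) ℂ) * h).trace := by
          conv_lhs => rw [← hrepr]
          rw [Finset.sum_mul, Matrix.trace_sum]
          exact Finset.sum_congr rfl fun k _ => by
            rw [smul_mul_assoc, Matrix.trace_smul, smul_eq_mul]
        have hconj := congrArg (starRingEnd ℂ) hgh
        rw [real_traces hmul hTr g hg h hh, map_sum] at hconj
        have hterm : ∀ k : bset,
            starRingEnd ℂ ((bB.repr g) k * ((k : Matrix (Fin 3) (Fin 3) ℂ) * h).trace)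
            = starRingEnd ℂ ((bB.repr g) k) * ((k : Matrix (Fin 3) (Fin 3) ℂ) * h).trace := by
          intro k
          rw [_root_.map_mul, real_traces hmul hTr _ (hbsub k.2) h hh]
        rw [Finset.sum_congr rfl (fun k _ => hterm k)] at hconj
        rw [Finset.sum_congr rfl (fun k _ => htr k), ← hconj, sub_self]
      have := sub_eq_zero.mp hdiff
      exact this
    calc θ g = θ (∑ k, (bB.repr g) k • (k : Matrix (Fin 3) (Fin 3) ℂ)) := by rw [hrepr]
      _ = ∑ k, (bB.repr g) k • mconj (k : Matrix (Fin 3) (Fin 3) ℂ) := by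
          rw [map_sum]
          exact Finset.sum_congr rfl fun k _ => by rw [_root_.map_smul, hθbasis]
      _ = mconj (∑ k, starRingEnd ℂ ((bB.repr g) k) • (k : Matrix (Fin 3) (Fin 3) ℂ)) := by
          rw [mconj_sum]
          exact Finset.sum_congr rfl fun k _ => by
            rw [mconj_smul, RingHomInvPair.comp_apply_eq]
      _ = mconj g := by rw [hkey]
  refine ⟨θ, hθG, ?_⟩
  have key : ∀ x ∈ Submodule.span ℂ G, ∀ y ∈ Submodule.span ℂ G, θ (x * y) = θ x * θ y := by
    intro x hx
    induction hx using Submodule.span_induction with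
    | mem g hg =>
        intro y hy
        induction hy using Submodule.span_induction with
        | mem h hh => rw [hθG g hg, hθG h hh, hθG _ (hmul g hg h hh), mconj_mul]
        | zero => simp
        | add a c _ _ iha ihc => rw [mul_add, map_add, iha, ihc, map_add, mul_add]
        | smul t a _ iha => rw [mul_smul_comm, _root_.map_smul, iha, _root_.map_smul, mul_smul_comm]
    | zero => intro y hy; simp
    | add a c ha hc iha ihc => intro y hy
                               rw [add_mul, map_add, iha y hy, ihc y hy, map_add, add_mul]
    | smul t a ha iha => intro y hy
                         rw [smul_mul_assoc, _root_.map_smul, iha y hy, _root_.map_smul, smul_mul_assoc]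
  intro x y
  exact key x (by rw [hspan]; trivial) y (by rw [hspan]; trivial)

end Part4SN

section Part5SN

variable {G : Set (Matrix (Fin 3) (Fin 3) ℂ)}

lemma main_false (hone : (1 : Matrix (Fin 3) (Fin 3) ℂ) ∈ G)
    (hmul : ∀ g ∈ G, ∀ h ∈ G, g * h ∈ G)
    (hTr : ∀ g ∈ G, ∃ t : ℝ, g.trace = (t : ℂ))
    (hstab : ∀ W : Submodule ℝ (Fin 3 → ℂ), StableR G W → W = ⊥ ∨ W = ⊤) :
    False := by
  classical
  have hspan : Submodule.span ℂ G = ⊤ := burnside hone hmul hstab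
  obtain ⟨θ, hθG, hθmul⟩ := exists_theta hone hmul hTr hspan
  set f : Fin 3 → Fin 3 → Matrix (Fin 3) (Fin 3) ℂ :=
    fun i j => θ (Matrix.single i j 1) with hfdef
  have hθ1 : θ 1 = 1 := by rw [hθG 1 hone, mconj_one]
  have fmul_same : ∀ i j l, f i j * f j l = f i l := by
    intro i j l
    rw [hfdef, ← hθmul, Matrix.single_mul_single_same, mul_one]
  have fmul_ne : ∀ (i j k l : Fin 3), j ≠ k → f i j * f k l = 0 := by
    intro i j k l h
    rw [hfdef, ← hθmul, Matrix.single_mul_single_of_ne (h := h), map_zero]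
  have hsumf : f 0 0 + f 1 1 + f 2 2 = 1 := by
    rw [hfdef, ← map_add, ← map_add, sum_std_diag, hθ1]
  have hf00 : f 0 0 ≠ 0 := by
    intro h0
    have hii : ∀ i, f i i = 0 := by
      intro i
      have h1 : f i i = f i 0 * f 0 i := (fmul_same i 0 i).symm
      have h2 : f i i * f i i = f i i := fmul_same i i i
      have h3 : f i i * f i i = 0 := by
        rw [h1]
        calc f i 0 * f 0 i * (f i 0 * f 0 i)
            = f i 0 * (f 0 i * f i 0) * f 0 i := by simp only [mul_assoc]
          _ = f i 0 * f 0 0 * f 0 i := by rw [fmul_same]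
          _ = 0 := by rw [h0, mul_zero, zero_mul]
      rw [← h2, h3]
    rw [hii 0, hii 1, hii 2] at hsumf
    simp only [add_zero, zero_add] at hsumf
    exact one_ne_zero hsumf.symm
  obtain ⟨v₁, hv₁⟩ := col_ne_zero hf00
  set v₀ : Fin 3 → ℂ := (f 0 0).mulVec v₁ with hv₀def
  have hv₀ : v₀ ≠ 0 := hv₁
  have hfix : (f 0 0).mulVec v₀ = v₀ := by
    rw [hv₀def, Matrix.mulVec_mulVec, fmul_same]
  set w : Fin 3 → Fin 3 → ℂ := fun i => (f i 0).mulVec v₀ with hwdef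
  have hw0 : w 0 = v₀ := by rw [hwdef]; simpa using hfix
  set s : Matrix (Fin 3) (Fin 3) ℂ := Matrix.of (fun p i => w i p) with hsdef
  have hcolmul : ∀ i j q, (f i j).mulVec (w q) = if j = q then w i else 0 := by
    intro i j q
    by_cases h : j = q
    · subst h
      rw [hwdef]
      simp only
      rw [Matrix.mulVec_mulVec, fmul_same]
      simp
    · rw [hwdef]
      simp only
      rw [Matrix.mulVec_mulVec, fmul_ne _ _ _ _ h, if_neg h, Matrix.zero_mulVec]
  have hrel_std : ∀ i j : Fin 3,
      θ (Matrix.single i j 1) * s = s * Matrix.single i j 1 := by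
    intro i j
    ext p q
    have hl : (f i j * s) p q = ((f i j).mulVec (w q)) p := by
      simp [Matrix.mul_apply, Matrix.mulVec, dotProduct, hsdef]
    have hr : (s * Matrix.single i j (1:ℂ)) p q = if j = q then w i p else 0 := by
      simp [Matrix.mul_apply, Matrix.single, hsdef, ite_and, Finset.sum_ite_eq,
        Finset.sum_ite_eq']
    show (f i j * s) p q = (s * Matrix.single i j (1:ℂ)) p q
    rw [hl, hr, hcolmul]
    by_cases h : j = q <;> simp [h]
  have hrel : ∀ x : Matrix (Fin 3) (Fin 3) ℂ, θ x * s = s * x := by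
    intro x
    have hx := Matrix.matrix_eq_sum_single x
    calc θ x * s = θ (∑ i, ∑ j, Matrix.single i j (x i j)) * s := by rw [← hx]
      _ = ∑ i, ∑ j, θ (Matrix.single i j (x i j)) * s := by
          rw [map_sum, Finset.sum_mul]
          exact Finset.sum_congr rfl fun i _ => by rw [map_sum, Finset.sum_mul]
      _ = ∑ i, ∑ j, s * Matrix.single i j (x i j) := by
          refine Finset.sum_congr rfl fun i _ => Finset.sum_congr rfl fun j _ => ?_
          have hsm : Matrix.single i j (x i j)
              = (x i j) • Matrix.single i j 1 := by
            rw [Matrix.smul_single, smul_eq_mul, mul_one]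
          rw [hsm, _root_.map_smul, smul_mul_assoc, mul_smul_comm, hrel_std]
      _ = s * ∑ i, ∑ j, Matrix.single i j (x i j) := by
          rw [Finset.mul_sum]
          exact Finset.sum_congr rfl fun i _ => by rw [Finset.mul_sum]
      _ = s * x := by rw [← hx]
  have relG : ∀ g ∈ G, mconj g * s = s * g := by
    intro g hg
    rw [← hθG g hg]
    exact hrel g
  have hs0 : s ≠ 0 := by
    intro h
    apply hv₀
    funext p
    have h1 : s p 0 = 0 := by rw [h]; rfl
    have h2 : s p 0 = w 0 p := rfl
    rw [h2, hw0] at h1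
    exact h1
  -- s is invertible
  have hkstab : ∀ g ∈ G, ∀ v ∈ LinearMap.ker (Matrix.mulVecLin s), g.mulVec v ∈
      LinearMap.ker (Matrix.mulVecLin s) := by
    intro g hg v hv
    have hv' : s.mulVec v = 0 := by simpa using hv
    have : Matrix.mulVecLin s (g.mulVec v) = 0 := by
      rw [Matrix.mulVecLin_apply, Matrix.mulVec_mulVec, ← relG g hg, ← Matrix.mulVec_mulVec,
        hv', Matrix.mulVec_zero]
    simpa using this
  have hNbot : LinearMap.ker (Matrix.mulVecLin s) = ⊥ := by
    rcases cstab hstab (LinearMap.ker (Matrix.mulVecLin s)) hkstab with h | h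
    · exact h
    · exfalso
      obtain ⟨v, hv⟩ := col_ne_zero hs0
      apply hv
      have : v ∈ LinearMap.ker (Matrix.mulVecLin s) := by rw [h]; trivial
      simpa using this
  have hsinj : Function.Injective s.mulVec := by
    have h1 : Function.Injective (Matrix.mulVecLin s) := LinearMap.ker_eq_bot.mp hNbot
    intro a b hab
    exact h1 (by simpa [Matrix.mulVecLin_apply] using hab)
  have hsunit : IsUnit s := Matrix.mulVec_injective_iff_isUnit.mp hsinj
  have hdetne : s.det ≠ 0 := by
    have := (Matrix.isUnit_iff_isUnit_det s).mp hsunit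
    exact this.ne_zero
  -- c = mconj s * s is a scalar
  set c : Matrix (Fin 3) (Fin 3) ℂ := mconj s * s with hcdef
  have hccommG : ∀ g ∈ G, c * g = g * c := by
    intro g hg
    have h1 : mconj s * mconj g = g * mconj s := by
      rw [← mconj_mul, ← relG g hg, mconj_mul, mconj_mconj]
    calc c * g = mconj s * (s * g) := by rw [hcdef, mul_assoc]
      _ = mconj s * (mconj g * s) := by rw [relG g hg]
      _ = (mconj s * mconj g) * s := by rw [mul_assoc]
      _ = (g * mconj s) * s := by rw [h1]
      _ = g * c := by rw [hcdef, mul_assoc]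
  have hccomm : ∀ x : Matrix (Fin 3) (Fin 3) ℂ, c * x = x * c := by
    intro x
    have hx : x ∈ Submodule.span ℂ G := by rw [hspan]; trivial
    induction hx using Submodule.span_induction with
    | mem g hg => exact hccommG g hg
    | zero => simp
    | add a b _ _ iha ihb => rw [mul_add, add_mul, iha, ihb]
    | smul t a _ iha => rw [mul_smul_comm, smul_mul_assoc, iha]
  have hscalar : c = c 0 0 • 1 := by
    ext i j
    by_cases h : i = j
    · subst h
      -- c i i = c 0 0 from commuting with E i 0 at entry (i,0)
      have := congrFun (congrFun (hccomm (Matrix.single i 0 1)) i) 0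
      simp only [Matrix.mul_apply, Matrix.single, Matrix.of_apply, ite_and,
        mul_ite, mul_one, mul_zero, ite_mul, one_mul, zero_mul,
        Finset.sum_ite_eq, Finset.sum_ite_eq', Finset.mem_univ, if_true] at this
      simpa [Matrix.one_apply] using this
    · -- c i j = 0 from commuting with E j j at entry (i,j), i ≠ j
      have := congrFun (congrFun (hccomm (Matrix.single j j 1)) i) j
      simp only [Matrix.mul_apply, Matrix.single, Matrix.of_apply, ite_and,
        mul_ite, mul_one, mul_zero, ite_mul, one_mul, zero_mul,
        Finset.sum_ite_eq, Finset.sum_ite_eq', Finset.mem_univ, if_true] at this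
      simp only [Matrix.smul_apply, Matrix.one_apply, h, if_neg h, smul_eq_mul, mul_zero]
      rw [this]
      simp [Ne.symm h]
  set lam : ℂ := c 0 0 with hlam
  -- lam is real
  have hlamreal : starRingEnd ℂ lam = lam := by
    have h1 : s * c = mconj c * s := by
      rw [hcdef, mconj_mul, mconj_mconj, ← mul_assoc]
    rw [hscalar] at h1
    have h2 : mconj (lam • (1 : Matrix (Fin 3) (Fin 3) ℂ)) = starRingEnd ℂ lam • 1 := by
      rw [mconj_smul, mconj_one]
    rw [h2] at h1
    have h3 : lam • s = starRingEnd ℂ lam • s := by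
      calc lam • s = s * (lam • 1) := by rw [mul_smul_comm, mul_one]
        _ = (starRingEnd ℂ lam • 1) * s := h1
        _ = starRingEnd ℂ lam • s := by rw [smul_mul_assoc, one_mul]
    by_contra hne
    apply hs0
    have h4 : (lam - starRingEnd ℂ lam) • s = 0 := by
      rw [sub_smul, h3, sub_self]
    rcases smul_eq_zero.mp h4 with h5 | h5
    · exact absurd (sub_eq_zero.mp h5).symm hne
    · exact h5
  obtain ⟨t, ht⟩ := Complex.conj_eq_iff_real.mp hlamreal
  -- lam ^ 3 = normSq (det s) > 0
  have hdetc : c.det = lam ^ 3 := by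
    rw [hscalar, Matrix.det_smul, Matrix.det_one, mul_one]
    norm_num
  have hdetc' : c.det = (Complex.normSq s.det : ℂ) := by
    rw [hcdef, Matrix.det_mul]
    have : (mconj s).det = starRingEnd ℂ s.det := by
      rw [mconj, ← RingHom.mapMatrix_apply, ← RingHom.map_det]
    rw [this]
    rw [mul_comm, Complex.mul_conj]
  have htpos : 0 < t := by
    have h1 : (t : ℂ) ^ 3 = (Complex.normSq s.det : ℂ) := by
      rw [← ht, ← hdetc, hdetc']
    have h2 : t ^ 3 = Complex.normSq s.det := by
      exact_mod_cast h1
    have h3 : 0 < Complex.normSq s.det := Complex.normSq_pos.mpr hdetne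
    by_contra hle
    push_neg at hle
    have h4 : t ^ 3 ≤ 0 := by nlinarith [sq_nonneg t]
    rw [h2] at h4
    exact absurd h3 (not_lt.mpr h4)
  -- normalize
  set ρ : ℝ := Real.sqrt t with hρ
  have hρpos : 0 < ρ := Real.sqrt_pos.mpr htpos
  have hρsq : ρ ^ 2 = t := Real.sq_sqrt htpos.le
  set s' : Matrix (Fin 3) (Fin 3) ℂ := ((ρ⁻¹ : ℝ) : ℂ) • s with hs'def
  have hs'c : mconj s' * s' = 1 := by
    have h1 : mconj s' = ((ρ⁻¹ : ℝ) : ℂ) • mconj s := by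
      rw [hs'def, mconj_smul, Complex.conj_ofReal]
    rw [h1, hs'def, smul_mul_assoc, mul_smul_comm, ← hcdef, hscalar, ht, smul_smul,
      smul_smul]
    have hρne : (ρ : ℂ) ≠ 0 := Complex.ofReal_ne_zero.mpr hρpos.ne'
    have h2 : ((ρ⁻¹ : ℝ) : ℂ) * ((ρ⁻¹ : ℝ) : ℂ) * (t : ℂ) = 1 := by
      rw [← hρsq]
      push_cast
      field_simp
      try ring
    rw [h2, one_smul]
  have hrelG' : ∀ g ∈ G, mconj g * s' = s' * g := by
    intro g hg
    rw [hs'def, mul_smul_comm, smul_mul_assoc, relG g hg]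
  -- the antilinear involution T
  set T : (Fin 3 → ℂ) →ₗ[ℝ] (Fin 3 → ℂ) :=
    { toFun := fun v => star (s'.mulVec v)
      map_add' := fun a b => by
        show star (s'.mulVec (a + b)) = star (s'.mulVec a) + star (s'.mulVec b)
        rw [Matrix.mulVec_add, star_add]
      map_smul' := fun r v => by
        simp only [RingHom.id_apply]
        rw [Matrix.mulVec_smul, star_smul, star_trivial] } with hT
  have hTapply : ∀ v, T v = star (s'.mulVec v) := fun v => rfl
  have hTcomm : ∀ g ∈ G, ∀ v, g.mulVec (T v) = T (g.mulVec v) := by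
    intro g hg v
    rw [hTapply, hTapply, Matrix.mulVec_mulVec, ← hrelG' g hg, ← Matrix.mulVec_mulVec]
    have h2 := mconj_mulVec (mconj g) (s'.mulVec v)
    rw [mconj_mconj] at h2
    exact h2
  have hT2 : ∀ v, T (T v) = v := by
    intro v
    rw [hTapply, hTapply]
    have h2 := mconj_mulVec s' (star (s'.mulVec v))
    rw [star_star] at h2
    rw [← h2, Matrix.mulVec_mulVec, hs'c, Matrix.one_mulVec]
  -- the fixed real subspace
  set W : Submodule ℝ (Fin 3 → ℂ) :=
    { carrier := {v | T v = v}
      add_mem' := fun ha hb => by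
        simp only [Set.mem_setOf_eq] at *
        rw [map_add, ha, hb]
      zero_mem' := by simp only [Set.mem_setOf_eq]; rw [map_zero]
      smul_mem' := fun r v hv => by
        simp only [Set.mem_setOf_eq] at *
        rw [_root_.map_smul, hv] } with hW
  have hWmem : ∀ v, v ∈ W ↔ T v = v := fun v => Iff.rfl
  have hWstab : StableR G W := by
    intro g hg v hv
    rw [hWmem] at hv ⊢
    rw [← hTcomm g hg, hv]
  set x₀ : Fin 3 → ℂ := fun _ => 1 with hx₀
  have hx₀ne : x₀ ≠ 0 := by
    intro h
    have := congrFun h 0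
    simp [hx₀] at this
  have hTI : ∀ v, T (Complex.I • v) = -Complex.I • T v := by
    intro v
    rw [hTapply, hTapply, Matrix.mulVec_smul, star_smul]
    simp
  have hWne_top : W ≠ ⊤ := by
    intro h
    have h1 : T x₀ = x₀ := by rw [← hWmem]; rw [h]; trivial
    have h2 : T (Complex.I • x₀) = Complex.I • x₀ := by rw [← hWmem]; rw [h]; trivial
    rw [hTI, h1] at h2
    have h3 := congrFun h2 0
    simp only [hx₀, Pi.smul_apply, smul_eq_mul, mul_one, neg_smul] at h3
    norm_num [Complex.ext_iff] at h3
  have hWne_bot : W ≠ ⊥ := by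
    rw [Submodule.ne_bot_iff]
    by_cases hcase : x₀ + T x₀ = 0
    · refine ⟨Complex.I • x₀, ?_, ?_⟩
      · rw [hWmem, hTI]
        have h5 : T x₀ = -x₀ := eq_neg_of_add_eq_zero_right hcase
        rw [h5, smul_neg, neg_smul, neg_neg]
      · simp [smul_eq_zero, Complex.I_ne_zero, hx₀ne]
    · refine ⟨x₀ + T x₀, ?_, hcase⟩
      rw [hWmem, map_add, hT2]
      abel
  rcases hstab W hWstab with h | h
  · exact hWne_bot h
  · exact hWne_top h

end Part5SN

theorem statement_11 (G : Set (Matrix (Fin 3) (Fin 3) ℂ))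
    (hGL : ∀ g ∈ G, IsUnit g)
    (hone : (1 : Matrix (Fin 3) (Fin 3) ℂ) ∈ G)
    (hmul : ∀ g ∈ G, ∀ h ∈ G, g * h ∈ G)
    (hinv : ∀ g ∈ G, g⁻¹ ∈ G)
    (hTr : ∀ g ∈ G, ∃ t : ℝ, g.trace = (t : ℂ)) :
    ∃ W : Submodule ℝ (Fin 3 → ℂ), StableR G W ∧ W ≠ ⊥ ∧ W ≠ ⊤ := by
  by_contra hcon
  push_neg at hcon
  refine main_false hone hmul hTr ?_
  intro W hW
  by_cases hb : W = ⊥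
  · exact Or.inl hb
  · exact Or.inr (hcon W hW hb)
end

section
/- Let g ∈ SU(J). Then the characteristic polynomial of g equals X³ − (tr g)·X² + conj(tr g)·X − 1. -/
open Matrix Polynomial

theorem statement_12 (g : Matrix (Fin 3) (Fin 3) ℂ) (hg : InSUJ g) :
    g.charpoly = X ^ 3 - C g.trace * X ^ 2 + C (star g.trace) * X - 1 := by
  obtain ⟨hd, hu⟩ := hg
  -- left inverse
  have hJJ : matJ * matJ = 1 := by
    rw [matJ, Matrix.mul_fin_three, Matrix.one_fin_three]; norm_num
  have hli : (matJ * gᴴ * matJ) * g = 1 := by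
    calc (matJ * gᴴ * matJ) * g = matJ * (gᴴ * matJ * g) := by simp only [Matrix.mul_assoc]
    _ = 1 := by rw [hu, hJJ]
  have hadj : g.adjugate = matJ * gᴴ * matJ := by
    have hinv : g⁻¹ = matJ * gᴴ * matJ := Matrix.inv_eq_left_inv hli
    rw [← hinv, Matrix.inv_def, hd, Ring.inverse_one, one_smul]
  have hB : matJ * gᴴ * matJ =
      !![star (g 0 0), star (g 2 0), star (g 1 0);
         star (g 0 2), star (g 2 2), star (g 1 2);
         star (g 0 1), star (g 2 1), star (g 1 1)] := by
    ext i j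
    fin_cases i <;> fin_cases j <;>
      simp [matJ, Matrix.mul_apply, Matrix.vecMul, dotProduct, Fin.sum_univ_three, Matrix.conjTranspose_apply, Matrix.vecHead, Matrix.vecTail]
  rw [hB, Matrix.adjugate_fin_three] at hadj
  have h0 : g 1 1 * g 2 2 - g 1 2 * g 2 1 = star (g 0 0) := by
    have := congrFun (congrFun hadj 0) 0; simpa using this
  have h1 : g 0 0 * g 2 2 - g 0 2 * g 2 0 = star (g 2 2) := by
    have := congrFun (congrFun hadj 1) 1; simpa using this
  have h2 : g 0 0 * g 1 1 - g 0 1 * g 1 0 = star (g 1 1) := by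
    have := congrFun (congrFun hadj 2) 2; simpa using this
  rw [Matrix.det_fin_three] at hd
  have H0 : (C (g 1 1) * C (g 2 2) - C (g 1 2) * C (g 2 1) : ℂ[X]) = C (star (g 0 0)) := by
    rw [← C_mul, ← C_mul, ← C_sub, h0]
  have H1 : (C (g 0 0) * C (g 2 2) - C (g 0 2) * C (g 2 0) : ℂ[X]) = C (star (g 2 2)) := by
    rw [← C_mul, ← C_mul, ← C_sub, h1]
  have H2 : (C (g 0 0) * C (g 1 1) - C (g 0 1) * C (g 1 0) : ℂ[X]) = C (star (g 1 1)) := by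
    rw [← C_mul, ← C_mul, ← C_sub, h2]
  have HD : (C (g 0 0) * C (g 1 1) * C (g 2 2) - C (g 0 0) * C (g 1 2) * C (g 2 1)
      - C (g 0 1) * C (g 1 0) * C (g 2 2) + C (g 0 1) * C (g 1 2) * C (g 2 0)
      + C (g 0 2) * C (g 1 0) * C (g 2 1) - C (g 0 2) * C (g 1 1) * C (g 2 0) : ℂ[X]) = 1 := by
    simp only [← C_mul, ← C_sub, ← C_add]
    rw [hd, C_1]
  have cne : ∀ i j : Fin 3, i ≠ j → g.charmatrix i j = -C (g i j) :=
    fun i j h => charmatrix_apply_ne _ _ _ h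
  rw [Matrix.charpoly, Matrix.det_fin_three, Matrix.trace_fin_three,
    charmatrix_apply_eq, charmatrix_apply_eq, charmatrix_apply_eq,
    cne 0 1 (by decide), cne 0 2 (by decide), cne 1 0 (by decide),
    cne 1 2 (by decide), cne 2 0 (by decide), cne 2 1 (by decide)]
  simp only [map_add, star_add]
  linear_combination (X : ℂ[X]) * H0 + X * H1 + X * H2 - HD
end

section
/- Let g ∈ SU(J) with t := tr g ∈ ℝ. Then the characteristic polynomial of g factors as (X − 1)·(X² − (t − 1)·X + 1); in particular, 1 is an eigenvalue of g. If moreover g is loxodromic (has an eigenvalue of modulus greater than 1), then there exists a real number r with r ∉ {0, 1, −1} such that the eigenvalues of g are exactly 1, r, and r⁻¹. -/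
open Matrix Polynomial

/-- Characteristic polynomial of a `3 × 3` matrix in terms of trace, adjugate trace, det. -/
lemma aux_charpoly_fin3 (M : Matrix (Fin 3) (Fin 3) ℂ) :
    M.charpoly = X^3 - C (M.trace) * X^2 + C ((adjugate M).trace) * X - C M.det := by
  rw [Matrix.charpoly, Matrix.det_fin_three, Matrix.trace_fin_three, Matrix.det_fin_three,
    Matrix.trace_fin_three]
  simp [Matrix.charmatrix_apply, Matrix.adjugate_fin_three, Matrix.one_apply, Matrix.diagonal_apply]
  ring

lemma aux_adjugate_trace (g : Matrix (Fin 3) (Fin 3) ℂ) (hg : InSUJ g)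
    (t : ℝ) (ht : g.trace = (t : ℂ)) : (adjugate g).trace = (t : ℂ) := by
  have hJJ : matJ * matJ = 1 := by
    simp [matJ, Matrix.mul_fin_three, Matrix.one_fin_three]
  have hL : (matJ * gᴴ * matJ) * g = 1 := by
    calc (matJ * gᴴ * matJ) * g = matJ * (gᴴ * matJ * g) := by
          simp only [mul_assoc]
      _ = 1 := by rw [hg.2, hJJ]
  have hadj : adjugate g = matJ * gᴴ * matJ := by
    have h1 : g * (matJ * gᴴ * matJ) = 1 := mul_eq_one_comm.mp hL
    have h2 := congrArg (fun M => adjugate g * M) h1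
    simp only [← mul_assoc, Matrix.adjugate_mul, hg.1, one_smul, one_mul, mul_one] at h2
    exact h2.symm
  have e0 : (matJ * gᴴ * matJ) 0 0 = star (g 0 0) := by
    simp [matJ, Matrix.mul_apply, Fin.sum_univ_three, Matrix.vecMul, dotProduct,
      Matrix.vecHead, Matrix.vecTail]
  have e1 : (matJ * gᴴ * matJ) 1 1 = star (g 2 2) := by
    simp [matJ, Matrix.mul_apply, Fin.sum_univ_three, Matrix.vecMul, dotProduct,
      Matrix.vecHead, Matrix.vecTail]
  have e2 : (matJ * gᴴ * matJ) 2 2 = star (g 1 1) := by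
    simp [matJ, Matrix.mul_apply, Fin.sum_univ_three, Matrix.vecMul, dotProduct,
      Matrix.vecHead, Matrix.vecTail]
  rw [hadj, Matrix.trace_fin_three, e0, e1, e2]
  have h := ht
  rw [Matrix.trace_fin_three] at h
  have := congrArg star h
  simp only [star_add, Complex.star_def, Complex.conj_ofReal] at this
  simp only [Complex.star_def]
  linear_combination this

theorem statement_13 (g : Matrix (Fin 3) (Fin 3) ℂ) (hg : InSUJ g)
    (t : ℝ) (ht : g.trace = (t : ℂ)) :
    g.charpoly = (X - 1) * (X ^ 2 - C ((t : ℂ) - 1) * X + 1) ∧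
    g.charpoly.IsRoot 1 ∧
    (Loxodromic g → ∃ r : ℝ, r ≠ 0 ∧ r ≠ 1 ∧ r ≠ -1 ∧
      g.charpoly.roots = {1, (r : ℂ), ((r⁻¹ : ℝ) : ℂ)}) := by
  have hcp : g.charpoly = (X - 1) * (X ^ 2 - C ((t : ℂ) - 1) * X + 1) := by
    rw [aux_charpoly_fin3, hg.1, ht, aux_adjugate_trace g hg t ht]
    simp only [map_sub, C_1]
    ring
  refine ⟨hcp, ?_, ?_⟩
  · rw [hcp]
    simp [IsRoot]
  · rintro ⟨μ, hroot, habs⟩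
    rw [hcp] at hroot
    simp only [IsRoot, eval_mul, eval_add, eval_sub, eval_pow, eval_one, eval_X, eval_C,
      mul_eq_zero] at hroot
    have hμ1 : μ ≠ 1 := by
      intro h
      rw [h] at habs
      simp at habs
    have hq : μ ^ 2 - ((t : ℂ) - 1) * μ + 1 = 0 := by
      rcases hroot with h | h
      · exact absurd (by linear_combination h) hμ1
      · exact h
    have hμ0 : μ ≠ 0 := by
      intro h
      rw [h] at hq
      simp at hq
    -- conjugate is also a root of the quadratic
    have hqc : (starRingEnd ℂ μ) ^ 2 - ((t : ℂ) - 1) * (starRingEnd ℂ μ) + 1 = 0 := by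
      have := congrArg (starRingEnd ℂ) hq
      simpa [map_sub, map_add, _root_.map_mul, map_pow, _root_.map_one, Complex.conj_ofReal] using this
    have hfac : (starRingEnd ℂ μ - μ) * (starRingEnd ℂ μ - (((t : ℂ) - 1) - μ)) = 0 := by
      linear_combination hqc - hq
    have hreal : starRingEnd ℂ μ = μ := by
      rcases mul_eq_zero.mp hfac with h | h
      · exact sub_eq_zero.mp h
      · exfalso
        have h2 : starRingEnd ℂ μ = ((t : ℂ) - 1) - μ := sub_eq_zero.mp h
        have h3 : μ * starRingEnd ℂ μ = 1 := by
          rw [h2]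
          linear_combination -hq
        have h4 : ‖μ‖ ^ 2 = 1 := by
          have := Complex.mul_conj μ
          rw [h3] at this
          have h5 : Complex.normSq μ = 1 := by
            exact_mod_cast this.symm
          rw [Complex.sq_norm, h5]
        nlinarith
    obtain ⟨r, hr⟩ : ∃ r : ℝ, μ = (r : ℂ) := ⟨μ.re, (Complex.conj_eq_iff_re.mp hreal).symm⟩
    have habsr : 1 < |r| := by
      rwa [hr, Complex.norm_real, Real.norm_eq_abs] at habs
    have hr0 : r ≠ 0 := by intro h; rw [h] at habsr; norm_num at habsr
    have hr1 : r ≠ 1 := by intro h; rw [h] at habsr; norm_num at habsr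
    have hrm1 : r ≠ -1 := by intro h; rw [h] at habsr; norm_num at habsr
    refine ⟨r, hr0, hr1, hrm1, ?_⟩
    have hinv : ((r⁻¹ : ℝ) : ℂ) = μ⁻¹ := by rw [hr]; push_cast; ring
    have hsum : μ + μ⁻¹ = (t : ℂ) - 1 := by
      field_simp
      linear_combination hq
    have hprod : μ * μ⁻¹ = 1 := mul_inv_cancel₀ hμ0
    have hpoly : g.charpoly = (X - C 1) * (X - C μ) * (X - C μ⁻¹) := by
      rw [hcp]
      have h1' : (C μ) * (C μ⁻¹) = (1 : ℂ[X]) := by rw [← C_mul, hprod, C_1]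
      have h2' : (C μ) + (C μ⁻¹) = C ((t : ℂ) - 1) := by rw [← C_add, hsum]
      simp only [C_1]
      linear_combination ((X : ℂ[X]) - 1) * X * h2' - ((X : ℂ[X]) - 1) * h1'
    rw [hpoly, Polynomial.roots_mul, Polynomial.roots_mul, Polynomial.roots_X_sub_C,
      Polynomial.roots_X_sub_C, Polynomial.roots_X_sub_C, hinv, ← hr]
    · rfl
    · exact mul_ne_zero (X_sub_C_ne_zero 1) (X_sub_C_ne_zero μ)
    · exact mul_ne_zero (mul_ne_zero (X_sub_C_ne_zero 1) (X_sub_C_ne_zero μ))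
        (X_sub_C_ne_zero μ⁻¹)
end

section
/- Let r be a real number with |r| > 1, let g be the diagonal 3×3 complex matrix diag(1, r⁻¹, r), and let h be a 3×3 complex matrix with det h = 1 whose (2,2)-entry h₂₂ (the bottom-right diagonal entry, indexing rows and columns by 0,1,2) is nonzero. Then there exists N such that for every integer n ≥ N, the matrix gⁿ·h has an eigenvalue of modulus greater than 1. -/
open Matrix Polynomial

lemma abs_msum_le (s : Multiset ℂ) : ‖s.sum‖ ≤ (s.map (fun z : ℂ => ‖z‖)).sum := by
  induction s using Multiset.induction with
  | empty => simp
  | cons a s ih =>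
    simp only [Multiset.sum_cons, Multiset.map_cons]
    exact (norm_add_le _ _).trans (by linarith)

theorem statement_15 (r : ℝ) (hr : 1 < |r|)
    (g : Matrix (Fin 3) (Fin 3) ℂ)
    (hg : g = Matrix.diagonal ![1, ((r : ℂ))⁻¹, (r : ℂ)])
    (h : Matrix (Fin 3) (Fin 3) ℂ) (hdet : h.det = 1) (h22 : h 2 2 ≠ 0) :
    ∃ N : ℤ, ∀ n : ℤ, N ≤ n →
      ∃ μ : ℂ, (g ^ n * h).charpoly.IsRoot μ ∧ 1 < ‖μ‖ := by
  
  set a := ‖h 0 0‖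
  set b := ‖h 1 1‖
  set c := ‖h 2 2‖
  have hc : 0 < c := by simpa [c] using h22
  obtain ⟨M, hM⟩ := pow_unbounded_of_one_lt ((3 + a + b) / c) hr
  refine ⟨M, fun n hn => ?_⟩
  have hn0 : (0:ℤ) ≤ n := le_trans (by positivity) hn
  -- n = m as a natural
  obtain ⟨m, rfl⟩ := Int.eq_ofNat_of_zero_le hn0
  have hm : M ≤ m := by exact_mod_cast hn
  have hgm : g ^ (m : ℤ) = Matrix.diagonal (![1, ((r : ℂ))⁻¹, (r : ℂ)] ^ m) := by
    rw [zpow_natCast, hg, Matrix.diagonal_pow]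
  -- trace
  have htr : (g ^ (m:ℤ) * h).trace
      = h 0 0 + ((r:ℂ)⁻¹)^m * h 1 1 + (r:ℂ)^m * h 2 2 := by
    rw [hgm]
    simp [Matrix.trace, Matrix.diag, Matrix.mul_apply, Fin.sum_univ_three,
      Matrix.diagonal, Pow.pow]
  -- lower bound on |trace|
  have hrpos : (0:ℝ) < |r| := lt_trans one_pos hr
  have habs : ∀ k : ℕ, ‖(r:ℂ)^k‖ = |r|^k := by
    intro k; rw [norm_pow, Complex.norm_real, Real.norm_eq_abs]
  have hrm : (3 + a + b) < |r|^m * c := by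
    have h1 : (3 + a + b) / c < |r|^m :=
      lt_of_lt_of_le hM (pow_le_pow_right₀ (le_of_lt hr) hm)
    calc 3 + a + b = (3 + a + b)/c * c := by field_simp
    _ < |r|^m * c := by exact mul_lt_mul_of_pos_right h1 hc
  have hinv : ‖((r:ℂ)⁻¹)^m * h 1 1‖ ≤ b := by
    rw [norm_mul, norm_pow, norm_inv, Complex.norm_real, Real.norm_eq_abs]
    have : |r|⁻¹ ^ m ≤ 1 := by
      apply pow_le_one₀ (by positivity)
      rw [inv_le_one_iff₀]; right; exact le_of_lt hr
    calc |r|⁻¹^m * b ≤ 1 * b := by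
          exact mul_le_mul_of_nonneg_right this (norm_nonneg _)
    _ = b := one_mul b
  have htrlb : 3 < ‖(g ^ (m:ℤ) * h).trace‖ := by
    rw [htr]
    set S := h 0 0 + ((r:ℂ)⁻¹)^m * h 1 1 + (r:ℂ)^m * h 2 2 with hS
    have key : ‖(r:ℂ)^m * h 2 2‖ ≤ ‖S‖ + a + b := by
      have e : (r:ℂ)^m * h 2 2 = S + (-(h 0 0)) + (-(((r:ℂ)⁻¹)^m * h 1 1)) := by
        rw [hS]; ring
      have h3 : ‖S + -(h 0 0) + -(((r:ℂ)⁻¹)^m * h 1 1)‖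
          ≤ ‖S + -(h 0 0)‖ + ‖-(((r:ℂ)⁻¹)^m * h 1 1)‖ :=
        norm_add_le _ _
      have h4 : ‖S + -(h 0 0)‖ ≤ ‖S‖ + ‖-(h 0 0)‖ :=
        norm_add_le _ _
      simp only [norm_neg] at h3 h4
      rw [e]
      linarith [hinv]
    have : |r|^m * c = ‖(r:ℂ)^m * h 2 2‖ := by
      rw [norm_mul, habs]
    linarith [key, hrm, this ▸ hrm]
  -- roots
  set p := (g ^ (m:ℤ) * h).charpoly with hp
  have hmon : p.Monic := Matrix.charpoly_monic _
  have hdeg : p.natDegree = 3 := by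
    rw [hp, Matrix.charpoly_natDegree_eq_dim]; simp
  have hroots : p.roots.card = 3 := by
    rw [← hdeg]
    exact (Polynomial.splits_iff_card_roots).mp (IsAlgClosed.splits p)
  have hsum : (g ^ (m:ℤ) * h).trace = p.roots.sum :=
    Matrix.trace_eq_sum_roots_charpoly _
  by_contra hcon
  push_neg at hcon
  have hb : ∀ x ∈ p.roots.map (fun z : ℂ => ‖z‖), x ≤ 1 := by
    intro x hx
    obtain ⟨μ, hμ, rfl⟩ := Multiset.mem_map.mp hx
    exact hcon μ ((Polynomial.mem_roots (hmon.ne_zero)).mp hμ)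
  have : ‖p.roots.sum‖ ≤ 3 := by
    refine (abs_msum_le _).trans ?_
    have := Multiset.sum_le_card_nsmul (p.roots.map (fun z : ℂ => ‖z‖)) 1 hb
    simpa [hroots] using this
  rw [hsum] at htrlb
  linarith
end

section
/- Let h ∈ SU(J) satisfy h₁₁ = 0 and h₂₂ = 0 (the two diagonal entries in positions (1,1) and (2,2), indexing rows and columns by 0,1,2). Then there exist a real number a > 0 and ε ∈ ℂ with |ε| = 1 such that h is the matrix with rows (−ε⁻², 0, 0), (0, 0, a·ε), (0, a⁻¹·ε, 0). -/
open Matrix Polynomial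

theorem statement_16 (h : Matrix (Fin 3) (Fin 3) ℂ) (hh : InSUJ h)
    (h11 : h 1 1 = 0) (h22 : h 2 2 = 0) :
    ∃ (a : ℝ) (ε : ℂ), 0 < a ∧ ‖ε‖ = 1 ∧
      h = !![-(ε ^ 2)⁻¹, 0, 0; 0, 0, (a : ℂ) * ε; 0, ((a⁻¹ : ℝ) : ℂ) * ε, 0] := by
  obtain ⟨hdet, hJ⟩ := hh
  have E : ∀ i j, (hᴴ * matJ * h) i j = matJ i j := fun i j => by rw [hJ]
  have e11 := E 1 1
  simp [Matrix.mul_apply, matJ, Fin.sum_univ_three, Matrix.conjTranspose_apply, h11, h22] at e11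
  have e22 := E 2 2
  simp [Matrix.mul_apply, matJ, Fin.sum_univ_three, Matrix.conjTranspose_apply, h11, h22] at e22
  have e01 := E 0 1
  simp [Matrix.mul_apply, matJ, Fin.sum_univ_three, Matrix.conjTranspose_apply, h11, h22, e11] at e01
  have e02 := E 0 2
  simp [Matrix.mul_apply, matJ, Fin.sum_univ_three, Matrix.conjTranspose_apply, h11, h22, e11, e22] at e02
  have e12 := E 1 2
  simp [Matrix.mul_apply, matJ, Fin.sum_univ_three, Matrix.conjTranspose_apply, h11, h22, e11, e22] at e12
  have h12ne : h 1 2 ≠ 0 := by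
    intro hz; rw [hz, mul_zero] at e12; exact one_ne_zero e12.symm
  have h21ne : h 2 1 ≠ 0 := by
    intro hz; rw [hz, map_zero, zero_mul] at e12; exact one_ne_zero e12.symm
  have h20 : h 2 0 = 0 := e02.resolve_right h12ne
  have h10 : h 1 0 = 0 := e01.resolve_right h21ne
  have hd : h 0 0 * (h 1 2 * h 2 1) = -1 := by
    have := hdet
    rw [Matrix.det_fin_three] at this
    rw [h11, h22, e11, e22, h10, h20] at this
    ring_nf at this ⊢
    linear_combination -this
  set a : ℝ := ‖h 1 2‖ with ha
  have hapos : 0 < a := norm_pos_iff.mpr h12ne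
  have hane : (a : ℂ) ≠ 0 := by exact_mod_cast ne_of_gt hapos
  refine ⟨a, h 1 2 / a, hapos, ?_, ?_⟩
  · rw [norm_div, Complex.norm_of_nonneg hapos.le, div_self (ne_of_gt hapos)]
  · have hsq : h 1 2 * (starRingEnd ℂ) (h 1 2) = (a : ℂ) ^ 2 := by
      rw [Complex.mul_conj]
      norm_cast
      rw [Complex.sq_norm, Complex.normSq_eq_norm_sq]
    have e12' : (starRingEnd ℂ) (h 1 2) * h 2 1 = 1 := by
      have := congrArg (starRingEnd ℂ) e12
      simpa [mul_comm] using this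
    have h21eq : h 2 1 = ((a⁻¹ : ℝ) : ℂ) * (h 1 2 / a) := by
      have h21a : h 2 1 * (a : ℂ) ^ 2 = h 1 2 := by
        linear_combination h 1 2 * e12' - h 2 1 * hsq
      rw [← h21a]; push_cast; field_simp
    have h00eq : h 0 0 = -((h 1 2 / a) ^ 2)⁻¹ := by
      have hprod : h 1 2 * h 2 1 = (h 1 2 / a) ^ 2 := by
        rw [h21eq]; push_cast; field_simp
      rw [hprod] at hd
      have hne : ((h 1 2 / a) ^ 2) ≠ 0 := pow_ne_zero _ (div_ne_zero h12ne hane)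
      field_simp at hd ⊢
      linear_combination hd
    ext i j
    fin_cases i <;> fin_cases j <;>
        simp [h00eq, e11, e22, h10, h11, h20, h22, h21eq, vecHead, vecTail] <;>
      field_simp
end
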